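/- arXiv:2506.03973 — 3 statements merged into one kernel-verified Lean document; each statement's English description precedes it below -/
import Mathlib

section
/- Let H be a graph and t a non-negative integer. If a graph G has a t-perturbation G~ with no vertex-minor isomorphic to H, then G has no vertex-minor isomorphic to (t+1)H. -/
namespace EP

variable {V W : Type}

/-- Local complementation of `G` at `v`: complement the adjacency between
every pair of distinct neighbours of `v`. -/
def localComp (G : SimpleGraph V) (v : V) : SimpleGraph V where
  Adj x y := x ≠ y ∧
    ((G.Adj v x ∧ G.Adj v y ∧ ¬ G.Adj x y) ∨ (¬(G.Adj v x ∧ G.Adj v y) ∧ G.Adj x y))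
  symm := by
    constructor
    intro x y h
    obtain ⟨hxy, h⟩ := h
    refine ⟨hxy.symm, ?_⟩
    rcases h with ⟨h1, h2, h3⟩ | ⟨h1, h2⟩
    · exact Or.inl ⟨h2, h1, fun h => h3 h.symm⟩
    · exact Or.inr ⟨fun h => h1 ⟨h.2, h.1⟩, h2.symm⟩
  loopless := ⟨fun x h => h.1 rfl⟩

/-- Two graphs on the same vertex set are locally equivalent if one is obtained from
the other by a sequence of local complementations. -/
def LocEquiv (G G' : SimpleGraph V) : Prop :=
  Relation.ReflTransGen (fun A B => ∃ v, B = localComp A v) G G'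

/-- `H` is a vertex-minor of `G`, located at the embedding `f`: some graph locally
equivalent to `G` induces a copy of `H` on the image of `f` (equivalently, `H` is
obtained from `G` by a sequence of local complementations and vertex deletions,
with `f` recording the surviving vertices). -/
def IsVertexMinorAt (G : SimpleGraph V) (H : SimpleGraph W) (f : W ↪ V) : Prop :=
  ∃ G' : SimpleGraph V, LocEquiv G G' ∧ ∀ x y, H.Adj x y ↔ G'.Adj (f x) (f y)

/-- `G` has a vertex-minor isomorphic to `H`. -/
def HasVertexMinor (G : SimpleGraph V) (H : SimpleGraph W) : Prop :=
  ∃ f : W ↪ V, IsVertexMinorAt G H f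

/-- `G₁` is a `t`-perturbation of `G₂`: they have the same vertex set `V`, and some
graph on `|V| + t` vertices contains both of them as vertex-minors (on `V`). -/
def IsPerturbation (t : ℕ) (G₁ G₂ : SimpleGraph V) : Prop :=
  ∃ Gbig : SimpleGraph (V ⊕ Fin t),
    IsVertexMinorAt Gbig G₁ ⟨Sum.inl, Sum.inl_injective⟩ ∧
    IsVertexMinorAt Gbig G₂ ⟨Sum.inl, Sum.inl_injective⟩

/-- The disjoint union of `k` copies of `H`. -/
def copies (k : ℕ) (H : SimpleGraph W) : SimpleGraph (Fin k × W) where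
  Adj x y := x.1 = y.1 ∧ H.Adj x.2 y.2
  symm := ⟨fun _ _ h => ⟨h.1.symm, h.2.symm⟩⟩
  loopless := ⟨fun x h => H.loopless.irrefl x.2 h.2⟩

/-- `G` is a circle graph: its vertices can be assigned chords of a circle
(encoded by pairs of distinct endpoints, all `2|V|` endpoints being distinct) so that
two distinct vertices are adjacent iff their chords cross, i.e. exactly one endpoint
of one chord lies strictly between the two endpoints of the other. -/
def IsCircleGraph (G : SimpleGraph V) : Prop :=
  ∃ a b : V → ℝ,
    (∀ u v, a u = a v → u = v) ∧ (∀ u v, b u = b v → u = v) ∧ (∀ u v, a u ≠ b v) ∧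
    ∀ u v, G.Adj u v ↔ u ≠ v ∧
      ¬((min (a u) (b u) < a v ∧ a v < max (a u) (b u)) ↔
        (min (a u) (b u) < b v ∧ b v < max (a u) (b u)))

/-- `G` is `t`-robust for `H` if every `t`-perturbation of `G` has a vertex-minor
isomorphic to `H`. -/
def Robust (t : ℕ) (G : SimpleGraph V) (H : SimpleGraph W) : Prop :=
  ∀ G' : SimpleGraph V, IsPerturbation t G' G → HasVertexMinor G' H

open Classical in
/-- The cut-rank of `X` in `G`: the rank over `GF(2)` of the `X × Xᶜ` submatrix of the
adjacency matrix of `G`. -/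
noncomputable def cutRank [Fintype V] (G : SimpleGraph V) (X : Set V) : ℕ :=
  (Matrix.of fun (x : X) (y : ↥Xᶜ) => if G.Adj x.1 y.1 then (1 : ZMod 2) else 0).rank

/-- The graph obtained from `G` by deleting all edges with exactly one end in `X`. -/
def cutDelete (G : SimpleGraph V) (X : Set V) : SimpleGraph V where
  Adj x y := G.Adj x y ∧ (x ∈ X ↔ y ∈ X)
  symm := ⟨fun _ _ h => ⟨h.1.symm, h.2.symm⟩⟩
  loopless := ⟨fun x h => G.loopless.irrefl x h.1⟩


/- ################ Infrastructure ################ -/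

lemma lc_adj (G : SimpleGraph V) (c x y : V) :
    (localComp G c).Adj x y ↔ x ≠ y ∧ ¬(G.Adj x y ↔ (G.Adj c x ∧ G.Adj c y)) := by
  constructor
  · rintro ⟨h, h2⟩; exact ⟨h, by tauto⟩
  · rintro ⟨h, h2⟩; exact ⟨h, by tauto⟩

def lcB {n : ℕ} (M : Fin n → Fin n → Bool) (c : Fin n) : Fin n → Fin n → Bool :=
  fun i j => !(decide (i = j)) && ((M i j).xor (M c i && M c j))

def runB {n : ℕ} (M : Fin n → Fin n → Bool) : List (Fin n) → (Fin n → Fin n → Bool)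
  | [] => M
  | c :: l => runB (lcB M c) l

def run (G : SimpleGraph V) : List V → SimpleGraph V
  | [] => G
  | c :: l => run (localComp G c) l

lemma run_append (G : SimpleGraph V) (l₁ l₂ : List V) :
    run G (l₁ ++ l₂) = run (run G l₁) l₂ := by
  induction l₁ generalizing G with
  | nil => rfl
  | cons c l ih => exact ih (localComp G c)

open Classical in
noncomputable def pb {n : ℕ} (G : SimpleGraph V) (e : Fin n → V) : Fin n → Fin n → Bool :=
  fun i j => if G.Adj (e i) (e j) then true else false

lemma pb_spec {n : ℕ} (G : SimpleGraph V) (e : Fin n → V) (i j : Fin n) :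
    pb G e i j = true ↔ G.Adj (e i) (e j) := by
  unfold pb; split <;> simp_all

lemma pb_spec_not {n : ℕ} (G : SimpleGraph V) (e : Fin n → V) (i j : Fin n) :
    pb G e i j = false ↔ ¬ G.Adj (e i) (e j) := by
  unfold pb; split <;> simp_all

lemma pb_diag {n : ℕ} (G : SimpleGraph V) (e : Fin n → V) (i : Fin n) :
    pb G e i i = false := by simp [pb]

lemma pb_symm {n : ℕ} (G : SimpleGraph V) (e : Fin n → V) (i j : Fin n) :
    pb G e i j = pb G e j i := by simp [pb, G.adj_comm]

lemma pb_lc {n : ℕ} (G : SimpleGraph V) (e : Fin n → V) (he : Function.Injective e)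
    (c : Fin n) : pb (localComp G (e c)) e = lcB (pb G e) c := by
  funext i j
  have hij : e i = e j ↔ i = j := ⟨fun h => he h, fun h => by rw [h]⟩
  by_cases h1 : G.Adj (e i) (e j) <;> by_cases h2 : G.Adj (e c) (e i) <;>
    by_cases h3 : G.Adj (e c) (e j) <;> by_cases h4 : i = j <;>
    simp_all [pb, lcB, lc_adj, hij]

lemma transfer {n : ℕ} (G : SimpleGraph V) (e : Fin n → V) (he : Function.Injective e)
    (l : List (Fin n)) (i j : Fin n) :
    (run G (l.map e)).Adj (e i) (e j) ↔ runB (pb G e) l i j = true := by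
  induction l generalizing G with
  | nil => rw [show run G ([].map e) = G from rfl,
      show runB (pb G e) [] = pb G e from rfl, pb_spec]
  | cons c l ih =>
      rw [show (c :: l).map e = e c :: l.map e from rfl,
        show run G (e c :: l.map e) = run (localComp G (e c)) (l.map e) from rfl,
        show runB (pb G e) (c :: l) = runB (lcB (pb G e) c) l from rfl,
        ← pb_lc G e he c]
      exact ih (localComp G (e c))

def mk2 (b01 : Bool) : Fin 2 → Fin 2 → Bool := ![![false,b01],![b01,false]]
def mk3 (b01 b02 b12 : Bool) : Fin 3 → Fin 3 → Bool :=
  ![![false,b01,b02],![b01,false,b12],![b02,b12,false]]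
def mk4 (b01 b02 b03 b12 b13 b23 : Bool) : Fin 4 → Fin 4 → Bool :=
  ![![false,b01,b02,b03],![b01,false,b12,b13],![b02,b12,false,b23],![b03,b13,b23,false]]
def mk5 (b01 b02 b03 b04 b12 b13 b14 b23 b24 b34 : Bool) : Fin 5 → Fin 5 → Bool :=
  ![![false,b01,b02,b03,b04],![b01,false,b12,b13,b14],![b02,b12,false,b23,b24],
    ![b03,b13,b23,false,b34],![b04,b14,b24,b34,false]]

lemma pb_eq_mk2 (G : SimpleGraph V) (e : Fin 2 → V) :
    pb G e = mk2 (pb G e 0 1) := by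
  funext i j
  fin_cases i <;> fin_cases j <;>
    first | exact pb_diag G e _ | rfl | exact pb_symm G e _ _

lemma pb_eq_mk3 (G : SimpleGraph V) (e : Fin 3 → V) :
    pb G e = mk3 (pb G e 0 1) (pb G e 0 2) (pb G e 1 2) := by
  funext i j
  fin_cases i <;> fin_cases j <;>
    first | exact pb_diag G e _ | rfl | exact pb_symm G e _ _

lemma pb_eq_mk4 (G : SimpleGraph V) (e : Fin 4 → V) :
    pb G e = mk4 (pb G e 0 1) (pb G e 0 2) (pb G e 0 3) (pb G e 1 2) (pb G e 1 3)
      (pb G e 2 3) := by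
  funext i j
  fin_cases i <;> fin_cases j <;>
    first | exact pb_diag G e _ | rfl | exact pb_symm G e _ _

lemma pb_eq_mk5 (G : SimpleGraph V) (e : Fin 5 → V) :
    pb G e = mk5 (pb G e 0 1) (pb G e 0 2) (pb G e 0 3) (pb G e 0 4) (pb G e 1 2)
      (pb G e 1 3) (pb G e 1 4) (pb G e 2 3) (pb G e 2 4) (pb G e 3 4) := by
  funext i j
  fin_cases i <;> fin_cases j <;>
    first | exact pb_diag G e _ | rfl | exact pb_symm G e _ _

lemma inj2 {a b : V} (h1 : a≠b) : Function.Injective ![a,b] := by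
  intro i j hij
  fin_cases i <;> fin_cases j <;> simp_all [Matrix.cons_val_zero, Matrix.cons_val_one,
    Matrix.head_cons, Matrix.tail_cons]

lemma inj3 {a b c : V} (h1 : a≠b) (h2 : a≠c) (h3 : b≠c) : Function.Injective ![a,b,c] := by
  intro i j hij
  fin_cases i <;> fin_cases j <;> simp_all [Matrix.cons_val_zero, Matrix.cons_val_one,
    Matrix.head_cons, Matrix.cons_val_two, Matrix.tail_cons]

lemma inj4 {a b c d : V} (h1 : a≠b) (h2 : a≠c) (h3 : a≠d) (h4 : b≠c) (h5 : b≠d)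
    (h6 : c≠d) : Function.Injective ![a,b,c,d] := by
  intro i j hij
  fin_cases i <;> fin_cases j <;> simp_all [Matrix.cons_val_zero, Matrix.cons_val_one,
    Matrix.head_cons, Matrix.cons_val_two, Matrix.cons_val_three, Matrix.tail_cons]

lemma inj5 {a b c d e : V} (h1 : a≠b) (h2 : a≠c) (h3 : a≠d) (h4 : a≠e) (h5 : b≠c)
    (h6 : b≠d) (h7 : b≠e) (h8 : c≠d) (h9 : c≠e) (h10 : d≠e) :
    Function.Injective ![a,b,c,d,e] := by
  intro i j hij
  fin_cases i <;> fin_cases j <;> simp_all [Matrix.cons_val_zero, Matrix.cons_val_one,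
    Matrix.head_cons, Matrix.cons_val_two, Matrix.cons_val_three, Matrix.cons_val_four,
    Matrix.tail_cons]

/-- Delete the vertex `v`: keep the vertex set but remove all edges at `v`. -/
def delv (v : V) (G : SimpleGraph V) : SimpleGraph V where
  Adj x y := G.Adj x y ∧ x ≠ v ∧ y ≠ v
  symm := ⟨fun _ _ h => ⟨h.1.symm, h.2.2, h.2.1⟩⟩
  loopless := ⟨fun x h => G.loopless.irrefl x h.1⟩

lemma delv_adj (v : V) (G : SimpleGraph V) (x y : V) :
    (delv v G).Adj x y ↔ G.Adj x y ∧ x ≠ v ∧ y ≠ v := Iff.rfl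

/- ################ Generated identities ################ -/

set_option maxHeartbeats 4000000 in
lemma E0_abs_vf : ∀ b01 : Bool, runB (mk2 b01) ([0,0] : List (Fin 2)) 0 1 = (mk2 b01) 0 1 := by decide
set_option maxHeartbeats 4000000 in
lemma E0_abs_fv : ∀ b01 : Bool, runB (mk2 b01) ([0,0] : List (Fin 2)) 1 0 = (mk2 b01) 1 0 := by decide
set_option maxHeartbeats 4000000 in
lemma E0_abs_ff : ∀ b01 b02 b12 : Bool, runB (mk3 b01 b02 b12) ([0,0] : List (Fin 3)) 1 2 = (mk3 b01 b02 b12) 1 2 := by decide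

lemma E0_pt (G : SimpleGraph V) (v : V)  (x y : V)  :
    (run G [v,v]).Adj x y ↔ G.Adj x y := by
  by_cases hxy : x = y
  · rw [hxy]; exact iff_of_false (SimpleGraph.irrefl _) (SimpleGraph.irrefl _)
  by_cases hxv : x = v
  · rw [hxv]
    by_cases hyv : y = v
    · rw [hxv] at hxy; exact absurd hyv (Ne.symm hxy)
    · have he : Function.Injective (![v,y] : Fin 2 → V) := inj2 (Ne.symm hyv)
      have t1 := transfer G ![v,y] he ([0,0] : List (Fin 2)) 0 1
      rw [show List.map (![v,y] : Fin 2 → V) ([0,0] : List (Fin 2)) = [v,v] from rfl, show (![v,y] : Fin 2 → V) 0 = v from rfl, show (![v,y] : Fin 2 → V) 1 = y from rfl] at t1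
      rw [t1, pb_eq_mk2 G ![v,y]]
      have habs := E0_abs_vf (pb G ![v,y] 0 1) 
      rw [habs, ← pb_eq_mk2 G ![v,y]]
      exact pb_spec G ![v,y] 0 1
  · by_cases hyv : y = v
    · rw [hyv]
      have he : Function.Injective (![v,x] : Fin 2 → V) := inj2 (Ne.symm hxv)
      have t1 := transfer G ![v,x] he ([0,0] : List (Fin 2)) 1 0
      rw [show List.map (![v,x] : Fin 2 → V) ([0,0] : List (Fin 2)) = [v,v] from rfl, show (![v,x] : Fin 2 → V) 1 = x from rfl, show (![v,x] : Fin 2 → V) 0 = v from rfl] at t1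
      rw [t1, pb_eq_mk2 G ![v,x]]
      have habs := E0_abs_fv (pb G ![v,x] 0 1) 
      rw [habs, ← pb_eq_mk2 G ![v,x]]
      exact pb_spec G ![v,x] 1 0
    · have he : Function.Injective (![v,x,y] : Fin 3 → V) := inj3 (Ne.symm hxv) (Ne.symm hyv) hxy
      have t1 := transfer G ![v,x,y] he ([0,0] : List (Fin 3)) 1 2
      rw [show List.map (![v,x,y] : Fin 3 → V) ([0,0] : List (Fin 3)) = [v,v] from rfl, show (![v,x,y] : Fin 3 → V) 1 = x from rfl, show (![v,x,y] : Fin 3 → V) 2 = y from rfl] at t1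
      rw [t1, pb_eq_mk3 G ![v,x,y]]
      have habs := E0_abs_ff (pb G ![v,x,y] 0 1) (pb G ![v,x,y] 0 2) (pb G ![v,x,y] 1 2) 
      rw [habs, ← pb_eq_mk3 G ![v,x,y]]
      exact pb_spec G ![v,x,y] 1 2

lemma E0_eq (G : SimpleGraph V) (v : V)  :
    run G [v,v] = run G [] := by
  ext x y
  exact E0_pt G v  x y


set_option maxHeartbeats 4000000 in
lemma E1_abs_vw : ∀ b01 : Bool, (mk2 b01) 0 1 = false → runB (mk2 b01) ([0,1] : List (Fin 2)) 0 1 = runB (mk2 b01) ([1,0] : List (Fin 2)) 0 1 := by decide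
set_option maxHeartbeats 4000000 in
lemma E1_abs_vf : ∀ b01 b02 b12 : Bool, (mk3 b01 b02 b12) 0 1 = false → runB (mk3 b01 b02 b12) ([0,1] : List (Fin 3)) 0 2 = runB (mk3 b01 b02 b12) ([1,0] : List (Fin 3)) 0 2 := by decide
set_option maxHeartbeats 4000000 in
lemma E1_abs_wv : ∀ b01 : Bool, (mk2 b01) 0 1 = false → runB (mk2 b01) ([0,1] : List (Fin 2)) 1 0 = runB (mk2 b01) ([1,0] : List (Fin 2)) 1 0 := by decide
set_option maxHeartbeats 4000000 in
lemma E1_abs_wf : ∀ b01 b02 b12 : Bool, (mk3 b01 b02 b12) 0 1 = false → runB (mk3 b01 b02 b12) ([0,1] : List (Fin 3)) 1 2 = runB (mk3 b01 b02 b12) ([1,0] : List (Fin 3)) 1 2 := by decide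
set_option maxHeartbeats 4000000 in
lemma E1_abs_fv : ∀ b01 b02 b12 : Bool, (mk3 b01 b02 b12) 0 1 = false → runB (mk3 b01 b02 b12) ([0,1] : List (Fin 3)) 2 0 = runB (mk3 b01 b02 b12) ([1,0] : List (Fin 3)) 2 0 := by decide
set_option maxHeartbeats 4000000 in
lemma E1_abs_fw : ∀ b01 b02 b12 : Bool, (mk3 b01 b02 b12) 0 1 = false → runB (mk3 b01 b02 b12) ([0,1] : List (Fin 3)) 2 1 = runB (mk3 b01 b02 b12) ([1,0] : List (Fin 3)) 2 1 := by decide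
set_option maxHeartbeats 4000000 in
lemma E1_abs_ff : ∀ b01 b02 b03 b12 b13 b23 : Bool, (mk4 b01 b02 b03 b12 b13 b23) 0 1 = false → runB (mk4 b01 b02 b03 b12 b13 b23) ([0,1] : List (Fin 4)) 2 3 = runB (mk4 b01 b02 b03 b12 b13 b23) ([1,0] : List (Fin 4)) 2 3 := by decide

lemma E1_pt (G : SimpleGraph V) (v w : V) (hnevw : v ≠ w) (hvw : ¬ G.Adj v w) (x y : V)  :
    (run G [v,w]).Adj x y ↔ (run G [w,v]).Adj x y := by
  by_cases hxy : x = y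
  · rw [hxy]; exact iff_of_false (SimpleGraph.irrefl _) (SimpleGraph.irrefl _)
  by_cases hxv : x = v
  · rw [hxv]
    by_cases hyv : y = v
    · rw [hxv] at hxy; exact absurd hyv (Ne.symm hxy)
    · by_cases hyw : y = w
      · rw [hyw]
        have he : Function.Injective (![v,w] : Fin 2 → V) := inj2 hnevw
        have t1 := transfer G ![v,w] he ([0,1] : List (Fin 2)) 0 1
        rw [show List.map (![v,w] : Fin 2 → V) ([0,1] : List (Fin 2)) = [v,w] from rfl, show (![v,w] : Fin 2 → V) 0 = v from rfl, show (![v,w] : Fin 2 → V) 1 = w from rfl] at t1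
        have t2 := transfer G ![v,w] he ([1,0] : List (Fin 2)) 0 1
        rw [show List.map (![v,w] : Fin 2 → V) ([1,0] : List (Fin 2)) = [w,v] from rfl, show (![v,w] : Fin 2 → V) 0 = v from rfl, show (![v,w] : Fin 2 → V) 1 = w from rfl] at t2
        have c0 : pb G ![v,w] 0 1 = false := (pb_spec_not G ![v,w] 0 1).mpr hvw
        rw [pb_eq_mk2 G ![v,w]] at c0
        rw [t1, t2, pb_eq_mk2 G ![v,w]]
        have habs := E1_abs_vw (pb G ![v,w] 0 1) c0
        rw [habs]
      · have he : Function.Injective (![v,w,y] : Fin 3 → V) := inj3 hnevw (Ne.symm hyv) (Ne.symm hyw)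
        have t1 := transfer G ![v,w,y] he ([0,1] : List (Fin 3)) 0 2
        rw [show List.map (![v,w,y] : Fin 3 → V) ([0,1] : List (Fin 3)) = [v,w] from rfl, show (![v,w,y] : Fin 3 → V) 0 = v from rfl, show (![v,w,y] : Fin 3 → V) 2 = y from rfl] at t1
        have t2 := transfer G ![v,w,y] he ([1,0] : List (Fin 3)) 0 2
        rw [show List.map (![v,w,y] : Fin 3 → V) ([1,0] : List (Fin 3)) = [w,v] from rfl, show (![v,w,y] : Fin 3 → V) 0 = v from rfl, show (![v,w,y] : Fin 3 → V) 2 = y from rfl] at t2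
        have c0 : pb G ![v,w,y] 0 1 = false := (pb_spec_not G ![v,w,y] 0 1).mpr hvw
        rw [pb_eq_mk3 G ![v,w,y]] at c0
        rw [t1, t2, pb_eq_mk3 G ![v,w,y]]
        have habs := E1_abs_vf (pb G ![v,w,y] 0 1) (pb G ![v,w,y] 0 2) (pb G ![v,w,y] 1 2) c0
        rw [habs]
  · by_cases hxw : x = w
    · rw [hxw]
      by_cases hyv : y = v
      · rw [hyv]
        have he : Function.Injective (![v,w] : Fin 2 → V) := inj2 hnevw
        have t1 := transfer G ![v,w] he ([0,1] : List (Fin 2)) 1 0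
        rw [show List.map (![v,w] : Fin 2 → V) ([0,1] : List (Fin 2)) = [v,w] from rfl, show (![v,w] : Fin 2 → V) 1 = w from rfl, show (![v,w] : Fin 2 → V) 0 = v from rfl] at t1
        have t2 := transfer G ![v,w] he ([1,0] : List (Fin 2)) 1 0
        rw [show List.map (![v,w] : Fin 2 → V) ([1,0] : List (Fin 2)) = [w,v] from rfl, show (![v,w] : Fin 2 → V) 1 = w from rfl, show (![v,w] : Fin 2 → V) 0 = v from rfl] at t2
        have c0 : pb G ![v,w] 0 1 = false := (pb_spec_not G ![v,w] 0 1).mpr hvw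
        rw [pb_eq_mk2 G ![v,w]] at c0
        rw [t1, t2, pb_eq_mk2 G ![v,w]]
        have habs := E1_abs_wv (pb G ![v,w] 0 1) c0
        rw [habs]
      · by_cases hyw : y = w
        · rw [hxw] at hxy; exact absurd hyw (Ne.symm hxy)
        · have he : Function.Injective (![v,w,y] : Fin 3 → V) := inj3 hnevw (Ne.symm hyv) (Ne.symm hyw)
          have t1 := transfer G ![v,w,y] he ([0,1] : List (Fin 3)) 1 2
          rw [show List.map (![v,w,y] : Fin 3 → V) ([0,1] : List (Fin 3)) = [v,w] from rfl, show (![v,w,y] : Fin 3 → V) 1 = w from rfl, show (![v,w,y] : Fin 3 → V) 2 = y from rfl] at t1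
          have t2 := transfer G ![v,w,y] he ([1,0] : List (Fin 3)) 1 2
          rw [show List.map (![v,w,y] : Fin 3 → V) ([1,0] : List (Fin 3)) = [w,v] from rfl, show (![v,w,y] : Fin 3 → V) 1 = w from rfl, show (![v,w,y] : Fin 3 → V) 2 = y from rfl] at t2
          have c0 : pb G ![v,w,y] 0 1 = false := (pb_spec_not G ![v,w,y] 0 1).mpr hvw
          rw [pb_eq_mk3 G ![v,w,y]] at c0
          rw [t1, t2, pb_eq_mk3 G ![v,w,y]]
          have habs := E1_abs_wf (pb G ![v,w,y] 0 1) (pb G ![v,w,y] 0 2) (pb G ![v,w,y] 1 2) c0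
          rw [habs]
    · by_cases hyv : y = v
      · rw [hyv]
        have he : Function.Injective (![v,w,x] : Fin 3 → V) := inj3 hnevw (Ne.symm hxv) (Ne.symm hxw)
        have t1 := transfer G ![v,w,x] he ([0,1] : List (Fin 3)) 2 0
        rw [show List.map (![v,w,x] : Fin 3 → V) ([0,1] : List (Fin 3)) = [v,w] from rfl, show (![v,w,x] : Fin 3 → V) 2 = x from rfl, show (![v,w,x] : Fin 3 → V) 0 = v from rfl] at t1
        have t2 := transfer G ![v,w,x] he ([1,0] : List (Fin 3)) 2 0
        rw [show List.map (![v,w,x] : Fin 3 → V) ([1,0] : List (Fin 3)) = [w,v] from rfl, show (![v,w,x] : Fin 3 → V) 2 = x from rfl, show (![v,w,x] : Fin 3 → V) 0 = v from rfl] at t2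
        have c0 : pb G ![v,w,x] 0 1 = false := (pb_spec_not G ![v,w,x] 0 1).mpr hvw
        rw [pb_eq_mk3 G ![v,w,x]] at c0
        rw [t1, t2, pb_eq_mk3 G ![v,w,x]]
        have habs := E1_abs_fv (pb G ![v,w,x] 0 1) (pb G ![v,w,x] 0 2) (pb G ![v,w,x] 1 2) c0
        rw [habs]
      · by_cases hyw : y = w
        · rw [hyw]
          have he : Function.Injective (![v,w,x] : Fin 3 → V) := inj3 hnevw (Ne.symm hxv) (Ne.symm hxw)
          have t1 := transfer G ![v,w,x] he ([0,1] : List (Fin 3)) 2 1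
          rw [show List.map (![v,w,x] : Fin 3 → V) ([0,1] : List (Fin 3)) = [v,w] from rfl, show (![v,w,x] : Fin 3 → V) 2 = x from rfl, show (![v,w,x] : Fin 3 → V) 1 = w from rfl] at t1
          have t2 := transfer G ![v,w,x] he ([1,0] : List (Fin 3)) 2 1
          rw [show List.map (![v,w,x] : Fin 3 → V) ([1,0] : List (Fin 3)) = [w,v] from rfl, show (![v,w,x] : Fin 3 → V) 2 = x from rfl, show (![v,w,x] : Fin 3 → V) 1 = w from rfl] at t2
          have c0 : pb G ![v,w,x] 0 1 = false := (pb_spec_not G ![v,w,x] 0 1).mpr hvw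
          rw [pb_eq_mk3 G ![v,w,x]] at c0
          rw [t1, t2, pb_eq_mk3 G ![v,w,x]]
          have habs := E1_abs_fw (pb G ![v,w,x] 0 1) (pb G ![v,w,x] 0 2) (pb G ![v,w,x] 1 2) c0
          rw [habs]
        · have he : Function.Injective (![v,w,x,y] : Fin 4 → V) := inj4 hnevw (Ne.symm hxv) (Ne.symm hyv) (Ne.symm hxw) (Ne.symm hyw) hxy
          have t1 := transfer G ![v,w,x,y] he ([0,1] : List (Fin 4)) 2 3
          rw [show List.map (![v,w,x,y] : Fin 4 → V) ([0,1] : List (Fin 4)) = [v,w] from rfl, show (![v,w,x,y] : Fin 4 → V) 2 = x from rfl, show (![v,w,x,y] : Fin 4 → V) 3 = y from rfl] at t1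
          have t2 := transfer G ![v,w,x,y] he ([1,0] : List (Fin 4)) 2 3
          rw [show List.map (![v,w,x,y] : Fin 4 → V) ([1,0] : List (Fin 4)) = [w,v] from rfl, show (![v,w,x,y] : Fin 4 → V) 2 = x from rfl, show (![v,w,x,y] : Fin 4 → V) 3 = y from rfl] at t2
          have c0 : pb G ![v,w,x,y] 0 1 = false := (pb_spec_not G ![v,w,x,y] 0 1).mpr hvw
          rw [pb_eq_mk4 G ![v,w,x,y]] at c0
          rw [t1, t2, pb_eq_mk4 G ![v,w,x,y]]
          have habs := E1_abs_ff (pb G ![v,w,x,y] 0 1) (pb G ![v,w,x,y] 0 2) (pb G ![v,w,x,y] 0 3) (pb G ![v,w,x,y] 1 2) (pb G ![v,w,x,y] 1 3) (pb G ![v,w,x,y] 2 3) c0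
          rw [habs]

lemma E1_eq (G : SimpleGraph V) (v w : V) (hnevw : v ≠ w) (hvw : ¬ G.Adj v w) :
    run G [v,w] = run G [w,v] := by
  ext x y
  exact E1_pt G v w hnevw hvw x y


set_option maxHeartbeats 4000000 in
lemma E3_abs_uv : ∀ b01 : Bool, (mk2 b01) 0 1 = true → runB (mk2 b01) ([1,0,1] : List (Fin 2)) 0 1 = runB (mk2 b01) ([0,1,0] : List (Fin 2)) 0 1 := by decide
set_option maxHeartbeats 4000000 in
lemma E3_abs_uf : ∀ b01 b02 b12 : Bool, (mk3 b01 b02 b12) 0 1 = true → runB (mk3 b01 b02 b12) ([1,0,1] : List (Fin 3)) 0 2 = runB (mk3 b01 b02 b12) ([0,1,0] : List (Fin 3)) 0 2 := by decide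
set_option maxHeartbeats 4000000 in
lemma E3_abs_vu : ∀ b01 : Bool, (mk2 b01) 0 1 = true → runB (mk2 b01) ([1,0,1] : List (Fin 2)) 1 0 = runB (mk2 b01) ([0,1,0] : List (Fin 2)) 1 0 := by decide
set_option maxHeartbeats 4000000 in
lemma E3_abs_vf : ∀ b01 b02 b12 : Bool, (mk3 b01 b02 b12) 0 1 = true → runB (mk3 b01 b02 b12) ([1,0,1] : List (Fin 3)) 1 2 = runB (mk3 b01 b02 b12) ([0,1,0] : List (Fin 3)) 1 2 := by decide
set_option maxHeartbeats 4000000 in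
lemma E3_abs_fu : ∀ b01 b02 b12 : Bool, (mk3 b01 b02 b12) 0 1 = true → runB (mk3 b01 b02 b12) ([1,0,1] : List (Fin 3)) 2 0 = runB (mk3 b01 b02 b12) ([0,1,0] : List (Fin 3)) 2 0 := by decide
set_option maxHeartbeats 4000000 in
lemma E3_abs_fv : ∀ b01 b02 b12 : Bool, (mk3 b01 b02 b12) 0 1 = true → runB (mk3 b01 b02 b12) ([1,0,1] : List (Fin 3)) 2 1 = runB (mk3 b01 b02 b12) ([0,1,0] : List (Fin 3)) 2 1 := by decide
set_option maxHeartbeats 4000000 in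
lemma E3_abs_ff : ∀ b01 b02 b03 b12 b13 b23 : Bool, (mk4 b01 b02 b03 b12 b13 b23) 0 1 = true → runB (mk4 b01 b02 b03 b12 b13 b23) ([1,0,1] : List (Fin 4)) 2 3 = runB (mk4 b01 b02 b03 b12 b13 b23) ([0,1,0] : List (Fin 4)) 2 3 := by decide

lemma E3_pt (G : SimpleGraph V) (u v : V) (hneuv : u ≠ v) (huv : G.Adj u v) (x y : V)  :
    (run G [v,u,v]).Adj x y ↔ (run G [u,v,u]).Adj x y := by
  by_cases hxy : x = y
  · rw [hxy]; exact iff_of_false (SimpleGraph.irrefl _) (SimpleGraph.irrefl _)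
  by_cases hxu : x = u
  · rw [hxu]
    by_cases hyu : y = u
    · rw [hxu] at hxy; exact absurd hyu (Ne.symm hxy)
    · by_cases hyv : y = v
      · rw [hyv]
        have he : Function.Injective (![u,v] : Fin 2 → V) := inj2 hneuv
        have t1 := transfer G ![u,v] he ([1,0,1] : List (Fin 2)) 0 1
        rw [show List.map (![u,v] : Fin 2 → V) ([1,0,1] : List (Fin 2)) = [v,u,v] from rfl, show (![u,v] : Fin 2 → V) 0 = u from rfl, show (![u,v] : Fin 2 → V) 1 = v from rfl] at t1
        have t2 := transfer G ![u,v] he ([0,1,0] : List (Fin 2)) 0 1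
        rw [show List.map (![u,v] : Fin 2 → V) ([0,1,0] : List (Fin 2)) = [u,v,u] from rfl, show (![u,v] : Fin 2 → V) 0 = u from rfl, show (![u,v] : Fin 2 → V) 1 = v from rfl] at t2
        have c0 : pb G ![u,v] 0 1 = true := (pb_spec G ![u,v] 0 1).mpr huv
        rw [pb_eq_mk2 G ![u,v]] at c0
        rw [t1, t2, pb_eq_mk2 G ![u,v]]
        have habs := E3_abs_uv (pb G ![u,v] 0 1) c0
        rw [habs]
      · have he : Function.Injective (![u,v,y] : Fin 3 → V) := inj3 hneuv (Ne.symm hyu) (Ne.symm hyv)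
        have t1 := transfer G ![u,v,y] he ([1,0,1] : List (Fin 3)) 0 2
        rw [show List.map (![u,v,y] : Fin 3 → V) ([1,0,1] : List (Fin 3)) = [v,u,v] from rfl, show (![u,v,y] : Fin 3 → V) 0 = u from rfl, show (![u,v,y] : Fin 3 → V) 2 = y from rfl] at t1
        have t2 := transfer G ![u,v,y] he ([0,1,0] : List (Fin 3)) 0 2
        rw [show List.map (![u,v,y] : Fin 3 → V) ([0,1,0] : List (Fin 3)) = [u,v,u] from rfl, show (![u,v,y] : Fin 3 → V) 0 = u from rfl, show (![u,v,y] : Fin 3 → V) 2 = y from rfl] at t2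
        have c0 : pb G ![u,v,y] 0 1 = true := (pb_spec G ![u,v,y] 0 1).mpr huv
        rw [pb_eq_mk3 G ![u,v,y]] at c0
        rw [t1, t2, pb_eq_mk3 G ![u,v,y]]
        have habs := E3_abs_uf (pb G ![u,v,y] 0 1) (pb G ![u,v,y] 0 2) (pb G ![u,v,y] 1 2) c0
        rw [habs]
  · by_cases hxv : x = v
    · rw [hxv]
      by_cases hyu : y = u
      · rw [hyu]
        have he : Function.Injective (![u,v] : Fin 2 → V) := inj2 hneuv
        have t1 := transfer G ![u,v] he ([1,0,1] : List (Fin 2)) 1 0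
        rw [show List.map (![u,v] : Fin 2 → V) ([1,0,1] : List (Fin 2)) = [v,u,v] from rfl, show (![u,v] : Fin 2 → V) 1 = v from rfl, show (![u,v] : Fin 2 → V) 0 = u from rfl] at t1
        have t2 := transfer G ![u,v] he ([0,1,0] : List (Fin 2)) 1 0
        rw [show List.map (![u,v] : Fin 2 → V) ([0,1,0] : List (Fin 2)) = [u,v,u] from rfl, show (![u,v] : Fin 2 → V) 1 = v from rfl, show (![u,v] : Fin 2 → V) 0 = u from rfl] at t2
        have c0 : pb G ![u,v] 0 1 = true := (pb_spec G ![u,v] 0 1).mpr huv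
        rw [pb_eq_mk2 G ![u,v]] at c0
        rw [t1, t2, pb_eq_mk2 G ![u,v]]
        have habs := E3_abs_vu (pb G ![u,v] 0 1) c0
        rw [habs]
      · by_cases hyv : y = v
        · rw [hxv] at hxy; exact absurd hyv (Ne.symm hxy)
        · have he : Function.Injective (![u,v,y] : Fin 3 → V) := inj3 hneuv (Ne.symm hyu) (Ne.symm hyv)
          have t1 := transfer G ![u,v,y] he ([1,0,1] : List (Fin 3)) 1 2
          rw [show List.map (![u,v,y] : Fin 3 → V) ([1,0,1] : List (Fin 3)) = [v,u,v] from rfl, show (![u,v,y] : Fin 3 → V) 1 = v from rfl, show (![u,v,y] : Fin 3 → V) 2 = y from rfl] at t1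
          have t2 := transfer G ![u,v,y] he ([0,1,0] : List (Fin 3)) 1 2
          rw [show List.map (![u,v,y] : Fin 3 → V) ([0,1,0] : List (Fin 3)) = [u,v,u] from rfl, show (![u,v,y] : Fin 3 → V) 1 = v from rfl, show (![u,v,y] : Fin 3 → V) 2 = y from rfl] at t2
          have c0 : pb G ![u,v,y] 0 1 = true := (pb_spec G ![u,v,y] 0 1).mpr huv
          rw [pb_eq_mk3 G ![u,v,y]] at c0
          rw [t1, t2, pb_eq_mk3 G ![u,v,y]]
          have habs := E3_abs_vf (pb G ![u,v,y] 0 1) (pb G ![u,v,y] 0 2) (pb G ![u,v,y] 1 2) c0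
          rw [habs]
    · by_cases hyu : y = u
      · rw [hyu]
        have he : Function.Injective (![u,v,x] : Fin 3 → V) := inj3 hneuv (Ne.symm hxu) (Ne.symm hxv)
        have t1 := transfer G ![u,v,x] he ([1,0,1] : List (Fin 3)) 2 0
        rw [show List.map (![u,v,x] : Fin 3 → V) ([1,0,1] : List (Fin 3)) = [v,u,v] from rfl, show (![u,v,x] : Fin 3 → V) 2 = x from rfl, show (![u,v,x] : Fin 3 → V) 0 = u from rfl] at t1
        have t2 := transfer G ![u,v,x] he ([0,1,0] : List (Fin 3)) 2 0
        rw [show List.map (![u,v,x] : Fin 3 → V) ([0,1,0] : List (Fin 3)) = [u,v,u] from rfl, show (![u,v,x] : Fin 3 → V) 2 = x from rfl, show (![u,v,x] : Fin 3 → V) 0 = u from rfl] at t2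
        have c0 : pb G ![u,v,x] 0 1 = true := (pb_spec G ![u,v,x] 0 1).mpr huv
        rw [pb_eq_mk3 G ![u,v,x]] at c0
        rw [t1, t2, pb_eq_mk3 G ![u,v,x]]
        have habs := E3_abs_fu (pb G ![u,v,x] 0 1) (pb G ![u,v,x] 0 2) (pb G ![u,v,x] 1 2) c0
        rw [habs]
      · by_cases hyv : y = v
        · rw [hyv]
          have he : Function.Injective (![u,v,x] : Fin 3 → V) := inj3 hneuv (Ne.symm hxu) (Ne.symm hxv)
          have t1 := transfer G ![u,v,x] he ([1,0,1] : List (Fin 3)) 2 1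
          rw [show List.map (![u,v,x] : Fin 3 → V) ([1,0,1] : List (Fin 3)) = [v,u,v] from rfl, show (![u,v,x] : Fin 3 → V) 2 = x from rfl, show (![u,v,x] : Fin 3 → V) 1 = v from rfl] at t1
          have t2 := transfer G ![u,v,x] he ([0,1,0] : List (Fin 3)) 2 1
          rw [show List.map (![u,v,x] : Fin 3 → V) ([0,1,0] : List (Fin 3)) = [u,v,u] from rfl, show (![u,v,x] : Fin 3 → V) 2 = x from rfl, show (![u,v,x] : Fin 3 → V) 1 = v from rfl] at t2
          have c0 : pb G ![u,v,x] 0 1 = true := (pb_spec G ![u,v,x] 0 1).mpr huv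
          rw [pb_eq_mk3 G ![u,v,x]] at c0
          rw [t1, t2, pb_eq_mk3 G ![u,v,x]]
          have habs := E3_abs_fv (pb G ![u,v,x] 0 1) (pb G ![u,v,x] 0 2) (pb G ![u,v,x] 1 2) c0
          rw [habs]
        · have he : Function.Injective (![u,v,x,y] : Fin 4 → V) := inj4 hneuv (Ne.symm hxu) (Ne.symm hyu) (Ne.symm hxv) (Ne.symm hyv) hxy
          have t1 := transfer G ![u,v,x,y] he ([1,0,1] : List (Fin 4)) 2 3
          rw [show List.map (![u,v,x,y] : Fin 4 → V) ([1,0,1] : List (Fin 4)) = [v,u,v] from rfl, show (![u,v,x,y] : Fin 4 → V) 2 = x from rfl, show (![u,v,x,y] : Fin 4 → V) 3 = y from rfl] at t1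
          have t2 := transfer G ![u,v,x,y] he ([0,1,0] : List (Fin 4)) 2 3
          rw [show List.map (![u,v,x,y] : Fin 4 → V) ([0,1,0] : List (Fin 4)) = [u,v,u] from rfl, show (![u,v,x,y] : Fin 4 → V) 2 = x from rfl, show (![u,v,x,y] : Fin 4 → V) 3 = y from rfl] at t2
          have c0 : pb G ![u,v,x,y] 0 1 = true := (pb_spec G ![u,v,x,y] 0 1).mpr huv
          rw [pb_eq_mk4 G ![u,v,x,y]] at c0
          rw [t1, t2, pb_eq_mk4 G ![u,v,x,y]]
          have habs := E3_abs_ff (pb G ![u,v,x,y] 0 1) (pb G ![u,v,x,y] 0 2) (pb G ![u,v,x,y] 0 3) (pb G ![u,v,x,y] 1 2) (pb G ![u,v,x,y] 1 3) (pb G ![u,v,x,y] 2 3) c0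
          rw [habs]

lemma E3_eq (G : SimpleGraph V) (u v : V) (hneuv : u ≠ v) (huv : G.Adj u v) :
    run G [v,u,v] = run G [u,v,u] := by
  ext x y
  exact E3_pt G u v hneuv huv x y


set_option maxHeartbeats 4000000 in
lemma E4_abs_uw : ∀ b01 b02 b12 : Bool, (mk3 b01 b02 b12) 0 1 = true → (mk3 b01 b02 b12) 1 2 = false → (mk3 b01 b02 b12) 0 2 = false → runB (mk3 b01 b02 b12) ([2,0,1,0] : List (Fin 3)) 0 2 = runB (mk3 b01 b02 b12) ([0,1,0,2] : List (Fin 3)) 0 2 := by decide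
set_option maxHeartbeats 4000000 in
lemma E4_abs_uf : ∀ b01 b02 b03 b12 b13 b23 : Bool, (mk4 b01 b02 b03 b12 b13 b23) 0 1 = true → (mk4 b01 b02 b03 b12 b13 b23) 1 2 = false → (mk4 b01 b02 b03 b12 b13 b23) 0 2 = false → runB (mk4 b01 b02 b03 b12 b13 b23) ([2,0,1,0] : List (Fin 4)) 0 3 = runB (mk4 b01 b02 b03 b12 b13 b23) ([0,1,0,2] : List (Fin 4)) 0 3 := by decide
set_option maxHeartbeats 4000000 in
lemma E4_abs_wu : ∀ b01 b02 b12 : Bool, (mk3 b01 b02 b12) 0 1 = true → (mk3 b01 b02 b12) 1 2 = false → (mk3 b01 b02 b12) 0 2 = false → runB (mk3 b01 b02 b12) ([2,0,1,0] : List (Fin 3)) 2 0 = runB (mk3 b01 b02 b12) ([0,1,0,2] : List (Fin 3)) 2 0 := by decide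
set_option maxHeartbeats 4000000 in
lemma E4_abs_wf : ∀ b01 b02 b03 b12 b13 b23 : Bool, (mk4 b01 b02 b03 b12 b13 b23) 0 1 = true → (mk4 b01 b02 b03 b12 b13 b23) 1 2 = false → (mk4 b01 b02 b03 b12 b13 b23) 0 2 = false → runB (mk4 b01 b02 b03 b12 b13 b23) ([2,0,1,0] : List (Fin 4)) 2 3 = runB (mk4 b01 b02 b03 b12 b13 b23) ([0,1,0,2] : List (Fin 4)) 2 3 := by decide
set_option maxHeartbeats 4000000 in
lemma E4_abs_fu : ∀ b01 b02 b03 b12 b13 b23 : Bool, (mk4 b01 b02 b03 b12 b13 b23) 0 1 = true → (mk4 b01 b02 b03 b12 b13 b23) 1 2 = false → (mk4 b01 b02 b03 b12 b13 b23) 0 2 = false → runB (mk4 b01 b02 b03 b12 b13 b23) ([2,0,1,0] : List (Fin 4)) 3 0 = runB (mk4 b01 b02 b03 b12 b13 b23) ([0,1,0,2] : List (Fin 4)) 3 0 := by decide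
set_option maxHeartbeats 4000000 in
lemma E4_abs_fw : ∀ b01 b02 b03 b12 b13 b23 : Bool, (mk4 b01 b02 b03 b12 b13 b23) 0 1 = true → (mk4 b01 b02 b03 b12 b13 b23) 1 2 = false → (mk4 b01 b02 b03 b12 b13 b23) 0 2 = false → runB (mk4 b01 b02 b03 b12 b13 b23) ([2,0,1,0] : List (Fin 4)) 3 2 = runB (mk4 b01 b02 b03 b12 b13 b23) ([0,1,0,2] : List (Fin 4)) 3 2 := by decide
set_option maxHeartbeats 4000000 in
lemma E4_abs_ff : ∀ b01 b02 b03 b04 b12 b13 b14 b23 b24 b34 : Bool, (mk5 b01 b02 b03 b04 b12 b13 b14 b23 b24 b34) 0 1 = true → (mk5 b01 b02 b03 b04 b12 b13 b14 b23 b24 b34) 1 2 = false → (mk5 b01 b02 b03 b04 b12 b13 b14 b23 b24 b34) 0 2 = false → runB (mk5 b01 b02 b03 b04 b12 b13 b14 b23 b24 b34) ([2,0,1,0] : List (Fin 5)) 3 4 = runB (mk5 b01 b02 b03 b04 b12 b13 b14 b23 b24 b34) ([0,1,0,2] : List (Fin 5)) 3 4 := by decide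

lemma E4_pt (G : SimpleGraph V) (u v w : V) (hneuv : u ≠ v) (hneuw : u ≠ w) (hnevw : v ≠ w) (huv : G.Adj u v) (hvw : ¬ G.Adj v w) (huw : ¬ G.Adj u w) (x y : V) (hx : x ≠ v) (hy : y ≠ v) :
    (run G [w,u,v,u]).Adj x y ↔ (run G [u,v,u,w]).Adj x y := by
  by_cases hxy : x = y
  · rw [hxy]; exact iff_of_false (SimpleGraph.irrefl _) (SimpleGraph.irrefl _)
  by_cases hxu : x = u
  · rw [hxu]
    by_cases hyu : y = u
    · rw [hxu] at hxy; exact absurd hyu (Ne.symm hxy)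
    · by_cases hyw : y = w
      · rw [hyw]
        have he : Function.Injective (![u,v,w] : Fin 3 → V) := inj3 hneuv hneuw hnevw
        have t1 := transfer G ![u,v,w] he ([2,0,1,0] : List (Fin 3)) 0 2
        rw [show List.map (![u,v,w] : Fin 3 → V) ([2,0,1,0] : List (Fin 3)) = [w,u,v,u] from rfl, show (![u,v,w] : Fin 3 → V) 0 = u from rfl, show (![u,v,w] : Fin 3 → V) 2 = w from rfl] at t1
        have t2 := transfer G ![u,v,w] he ([0,1,0,2] : List (Fin 3)) 0 2
        rw [show List.map (![u,v,w] : Fin 3 → V) ([0,1,0,2] : List (Fin 3)) = [u,v,u,w] from rfl, show (![u,v,w] : Fin 3 → V) 0 = u from rfl, show (![u,v,w] : Fin 3 → V) 2 = w from rfl] at t2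
        have c0 : pb G ![u,v,w] 0 1 = true := (pb_spec G ![u,v,w] 0 1).mpr huv
        have c1 : pb G ![u,v,w] 1 2 = false := (pb_spec_not G ![u,v,w] 1 2).mpr hvw
        have c2 : pb G ![u,v,w] 0 2 = false := (pb_spec_not G ![u,v,w] 0 2).mpr huw
        rw [pb_eq_mk3 G ![u,v,w]] at c0 c1 c2
        rw [t1, t2, pb_eq_mk3 G ![u,v,w]]
        have habs := E4_abs_uw (pb G ![u,v,w] 0 1) (pb G ![u,v,w] 0 2) (pb G ![u,v,w] 1 2) c0 c1 c2
        rw [habs]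
      · have he : Function.Injective (![u,v,w,y] : Fin 4 → V) := inj4 hneuv hneuw (Ne.symm hyu) hnevw (Ne.symm hy) (Ne.symm hyw)
        have t1 := transfer G ![u,v,w,y] he ([2,0,1,0] : List (Fin 4)) 0 3
        rw [show List.map (![u,v,w,y] : Fin 4 → V) ([2,0,1,0] : List (Fin 4)) = [w,u,v,u] from rfl, show (![u,v,w,y] : Fin 4 → V) 0 = u from rfl, show (![u,v,w,y] : Fin 4 → V) 3 = y from rfl] at t1
        have t2 := transfer G ![u,v,w,y] he ([0,1,0,2] : List (Fin 4)) 0 3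
        rw [show List.map (![u,v,w,y] : Fin 4 → V) ([0,1,0,2] : List (Fin 4)) = [u,v,u,w] from rfl, show (![u,v,w,y] : Fin 4 → V) 0 = u from rfl, show (![u,v,w,y] : Fin 4 → V) 3 = y from rfl] at t2
        have c0 : pb G ![u,v,w,y] 0 1 = true := (pb_spec G ![u,v,w,y] 0 1).mpr huv
        have c1 : pb G ![u,v,w,y] 1 2 = false := (pb_spec_not G ![u,v,w,y] 1 2).mpr hvw
        have c2 : pb G ![u,v,w,y] 0 2 = false := (pb_spec_not G ![u,v,w,y] 0 2).mpr huw
        rw [pb_eq_mk4 G ![u,v,w,y]] at c0 c1 c2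
        rw [t1, t2, pb_eq_mk4 G ![u,v,w,y]]
        have habs := E4_abs_uf (pb G ![u,v,w,y] 0 1) (pb G ![u,v,w,y] 0 2) (pb G ![u,v,w,y] 0 3) (pb G ![u,v,w,y] 1 2) (pb G ![u,v,w,y] 1 3) (pb G ![u,v,w,y] 2 3) c0 c1 c2
        rw [habs]
  · by_cases hxw : x = w
    · rw [hxw]
      by_cases hyu : y = u
      · rw [hyu]
        have he : Function.Injective (![u,v,w] : Fin 3 → V) := inj3 hneuv hneuw hnevw
        have t1 := transfer G ![u,v,w] he ([2,0,1,0] : List (Fin 3)) 2 0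
        rw [show List.map (![u,v,w] : Fin 3 → V) ([2,0,1,0] : List (Fin 3)) = [w,u,v,u] from rfl, show (![u,v,w] : Fin 3 → V) 2 = w from rfl, show (![u,v,w] : Fin 3 → V) 0 = u from rfl] at t1
        have t2 := transfer G ![u,v,w] he ([0,1,0,2] : List (Fin 3)) 2 0
        rw [show List.map (![u,v,w] : Fin 3 → V) ([0,1,0,2] : List (Fin 3)) = [u,v,u,w] from rfl, show (![u,v,w] : Fin 3 → V) 2 = w from rfl, show (![u,v,w] : Fin 3 → V) 0 = u from rfl] at t2
        have c0 : pb G ![u,v,w] 0 1 = true := (pb_spec G ![u,v,w] 0 1).mpr huv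
        have c1 : pb G ![u,v,w] 1 2 = false := (pb_spec_not G ![u,v,w] 1 2).mpr hvw
        have c2 : pb G ![u,v,w] 0 2 = false := (pb_spec_not G ![u,v,w] 0 2).mpr huw
        rw [pb_eq_mk3 G ![u,v,w]] at c0 c1 c2
        rw [t1, t2, pb_eq_mk3 G ![u,v,w]]
        have habs := E4_abs_wu (pb G ![u,v,w] 0 1) (pb G ![u,v,w] 0 2) (pb G ![u,v,w] 1 2) c0 c1 c2
        rw [habs]
      · by_cases hyw : y = w
        · rw [hxw] at hxy; exact absurd hyw (Ne.symm hxy)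
        · have he : Function.Injective (![u,v,w,y] : Fin 4 → V) := inj4 hneuv hneuw (Ne.symm hyu) hnevw (Ne.symm hy) (Ne.symm hyw)
          have t1 := transfer G ![u,v,w,y] he ([2,0,1,0] : List (Fin 4)) 2 3
          rw [show List.map (![u,v,w,y] : Fin 4 → V) ([2,0,1,0] : List (Fin 4)) = [w,u,v,u] from rfl, show (![u,v,w,y] : Fin 4 → V) 2 = w from rfl, show (![u,v,w,y] : Fin 4 → V) 3 = y from rfl] at t1
          have t2 := transfer G ![u,v,w,y] he ([0,1,0,2] : List (Fin 4)) 2 3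
          rw [show List.map (![u,v,w,y] : Fin 4 → V) ([0,1,0,2] : List (Fin 4)) = [u,v,u,w] from rfl, show (![u,v,w,y] : Fin 4 → V) 2 = w from rfl, show (![u,v,w,y] : Fin 4 → V) 3 = y from rfl] at t2
          have c0 : pb G ![u,v,w,y] 0 1 = true := (pb_spec G ![u,v,w,y] 0 1).mpr huv
          have c1 : pb G ![u,v,w,y] 1 2 = false := (pb_spec_not G ![u,v,w,y] 1 2).mpr hvw
          have c2 : pb G ![u,v,w,y] 0 2 = false := (pb_spec_not G ![u,v,w,y] 0 2).mpr huw
          rw [pb_eq_mk4 G ![u,v,w,y]] at c0 c1 c2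
          rw [t1, t2, pb_eq_mk4 G ![u,v,w,y]]
          have habs := E4_abs_wf (pb G ![u,v,w,y] 0 1) (pb G ![u,v,w,y] 0 2) (pb G ![u,v,w,y] 0 3) (pb G ![u,v,w,y] 1 2) (pb G ![u,v,w,y] 1 3) (pb G ![u,v,w,y] 2 3) c0 c1 c2
          rw [habs]
    · by_cases hyu : y = u
      · rw [hyu]
        have he : Function.Injective (![u,v,w,x] : Fin 4 → V) := inj4 hneuv hneuw (Ne.symm hxu) hnevw (Ne.symm hx) (Ne.symm hxw)
        have t1 := transfer G ![u,v,w,x] he ([2,0,1,0] : List (Fin 4)) 3 0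
        rw [show List.map (![u,v,w,x] : Fin 4 → V) ([2,0,1,0] : List (Fin 4)) = [w,u,v,u] from rfl, show (![u,v,w,x] : Fin 4 → V) 3 = x from rfl, show (![u,v,w,x] : Fin 4 → V) 0 = u from rfl] at t1
        have t2 := transfer G ![u,v,w,x] he ([0,1,0,2] : List (Fin 4)) 3 0
        rw [show List.map (![u,v,w,x] : Fin 4 → V) ([0,1,0,2] : List (Fin 4)) = [u,v,u,w] from rfl, show (![u,v,w,x] : Fin 4 → V) 3 = x from rfl, show (![u,v,w,x] : Fin 4 → V) 0 = u from rfl] at t2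
        have c0 : pb G ![u,v,w,x] 0 1 = true := (pb_spec G ![u,v,w,x] 0 1).mpr huv
        have c1 : pb G ![u,v,w,x] 1 2 = false := (pb_spec_not G ![u,v,w,x] 1 2).mpr hvw
        have c2 : pb G ![u,v,w,x] 0 2 = false := (pb_spec_not G ![u,v,w,x] 0 2).mpr huw
        rw [pb_eq_mk4 G ![u,v,w,x]] at c0 c1 c2
        rw [t1, t2, pb_eq_mk4 G ![u,v,w,x]]
        have habs := E4_abs_fu (pb G ![u,v,w,x] 0 1) (pb G ![u,v,w,x] 0 2) (pb G ![u,v,w,x] 0 3) (pb G ![u,v,w,x] 1 2) (pb G ![u,v,w,x] 1 3) (pb G ![u,v,w,x] 2 3) c0 c1 c2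
        rw [habs]
      · by_cases hyw : y = w
        · rw [hyw]
          have he : Function.Injective (![u,v,w,x] : Fin 4 → V) := inj4 hneuv hneuw (Ne.symm hxu) hnevw (Ne.symm hx) (Ne.symm hxw)
          have t1 := transfer G ![u,v,w,x] he ([2,0,1,0] : List (Fin 4)) 3 2
          rw [show List.map (![u,v,w,x] : Fin 4 → V) ([2,0,1,0] : List (Fin 4)) = [w,u,v,u] from rfl, show (![u,v,w,x] : Fin 4 → V) 3 = x from rfl, show (![u,v,w,x] : Fin 4 → V) 2 = w from rfl] at t1
          have t2 := transfer G ![u,v,w,x] he ([0,1,0,2] : List (Fin 4)) 3 2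
          rw [show List.map (![u,v,w,x] : Fin 4 → V) ([0,1,0,2] : List (Fin 4)) = [u,v,u,w] from rfl, show (![u,v,w,x] : Fin 4 → V) 3 = x from rfl, show (![u,v,w,x] : Fin 4 → V) 2 = w from rfl] at t2
          have c0 : pb G ![u,v,w,x] 0 1 = true := (pb_spec G ![u,v,w,x] 0 1).mpr huv
          have c1 : pb G ![u,v,w,x] 1 2 = false := (pb_spec_not G ![u,v,w,x] 1 2).mpr hvw
          have c2 : pb G ![u,v,w,x] 0 2 = false := (pb_spec_not G ![u,v,w,x] 0 2).mpr huw
          rw [pb_eq_mk4 G ![u,v,w,x]] at c0 c1 c2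
          rw [t1, t2, pb_eq_mk4 G ![u,v,w,x]]
          have habs := E4_abs_fw (pb G ![u,v,w,x] 0 1) (pb G ![u,v,w,x] 0 2) (pb G ![u,v,w,x] 0 3) (pb G ![u,v,w,x] 1 2) (pb G ![u,v,w,x] 1 3) (pb G ![u,v,w,x] 2 3) c0 c1 c2
          rw [habs]
        · have he : Function.Injective (![u,v,w,x,y] : Fin 5 → V) := inj5 hneuv hneuw (Ne.symm hxu) (Ne.symm hyu) hnevw (Ne.symm hx) (Ne.symm hy) (Ne.symm hxw) (Ne.symm hyw) hxy
          have t1 := transfer G ![u,v,w,x,y] he ([2,0,1,0] : List (Fin 5)) 3 4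
          rw [show List.map (![u,v,w,x,y] : Fin 5 → V) ([2,0,1,0] : List (Fin 5)) = [w,u,v,u] from rfl, show (![u,v,w,x,y] : Fin 5 → V) 3 = x from rfl, show (![u,v,w,x,y] : Fin 5 → V) 4 = y from rfl] at t1
          have t2 := transfer G ![u,v,w,x,y] he ([0,1,0,2] : List (Fin 5)) 3 4
          rw [show List.map (![u,v,w,x,y] : Fin 5 → V) ([0,1,0,2] : List (Fin 5)) = [u,v,u,w] from rfl, show (![u,v,w,x,y] : Fin 5 → V) 3 = x from rfl, show (![u,v,w,x,y] : Fin 5 → V) 4 = y from rfl] at t2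
          have c0 : pb G ![u,v,w,x,y] 0 1 = true := (pb_spec G ![u,v,w,x,y] 0 1).mpr huv
          have c1 : pb G ![u,v,w,x,y] 1 2 = false := (pb_spec_not G ![u,v,w,x,y] 1 2).mpr hvw
          have c2 : pb G ![u,v,w,x,y] 0 2 = false := (pb_spec_not G ![u,v,w,x,y] 0 2).mpr huw
          rw [pb_eq_mk5 G ![u,v,w,x,y]] at c0 c1 c2
          rw [t1, t2, pb_eq_mk5 G ![u,v,w,x,y]]
          have habs := E4_abs_ff (pb G ![u,v,w,x,y] 0 1) (pb G ![u,v,w,x,y] 0 2) (pb G ![u,v,w,x,y] 0 3) (pb G ![u,v,w,x,y] 0 4) (pb G ![u,v,w,x,y] 1 2) (pb G ![u,v,w,x,y] 1 3) (pb G ![u,v,w,x,y] 1 4) (pb G ![u,v,w,x,y] 2 3) (pb G ![u,v,w,x,y] 2 4) (pb G ![u,v,w,x,y] 3 4) c0 c1 c2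
          rw [habs]

lemma E4_eqd (G : SimpleGraph V) (u v w : V) (hneuv : u ≠ v) (hneuw : u ≠ w) (hnevw : v ≠ w) (huv : G.Adj u v) (hvw : ¬ G.Adj v w) (huw : ¬ G.Adj u w) :
    delv v (run G [w,u,v,u]) = delv v (run G [u,v,u,w]) := by
  ext x y
  rw [delv_adj, delv_adj]
  constructor
  · rintro ⟨h, hx, hy⟩; exact ⟨(E4_pt G u v w hneuv hneuw hnevw huv hvw huw x y hx hy).mp h, hx, hy⟩
  · rintro ⟨h, hx, hy⟩; exact ⟨(E4_pt G u v w hneuv hneuw hnevw huv hvw huw x y hx hy).mpr h, hx, hy⟩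


set_option maxHeartbeats 4000000 in
lemma E5_abs_uw : ∀ b01 b02 b12 : Bool, (mk3 b01 b02 b12) 0 1 = true → (mk3 b01 b02 b12) 1 2 = false → (mk3 b01 b02 b12) 0 2 = true → runB (mk3 b01 b02 b12) ([2,0,1,0] : List (Fin 3)) 0 2 = runB (mk3 b01 b02 b12) ([0,1,2] : List (Fin 3)) 0 2 := by decide
set_option maxHeartbeats 4000000 in
lemma E5_abs_uf : ∀ b01 b02 b03 b12 b13 b23 : Bool, (mk4 b01 b02 b03 b12 b13 b23) 0 1 = true → (mk4 b01 b02 b03 b12 b13 b23) 1 2 = false → (mk4 b01 b02 b03 b12 b13 b23) 0 2 = true → runB (mk4 b01 b02 b03 b12 b13 b23) ([2,0,1,0] : List (Fin 4)) 0 3 = runB (mk4 b01 b02 b03 b12 b13 b23) ([0,1,2] : List (Fin 4)) 0 3 := by decide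
set_option maxHeartbeats 4000000 in
lemma E5_abs_wu : ∀ b01 b02 b12 : Bool, (mk3 b01 b02 b12) 0 1 = true → (mk3 b01 b02 b12) 1 2 = false → (mk3 b01 b02 b12) 0 2 = true → runB (mk3 b01 b02 b12) ([2,0,1,0] : List (Fin 3)) 2 0 = runB (mk3 b01 b02 b12) ([0,1,2] : List (Fin 3)) 2 0 := by decide
set_option maxHeartbeats 4000000 in
lemma E5_abs_wf : ∀ b01 b02 b03 b12 b13 b23 : Bool, (mk4 b01 b02 b03 b12 b13 b23) 0 1 = true → (mk4 b01 b02 b03 b12 b13 b23) 1 2 = false → (mk4 b01 b02 b03 b12 b13 b23) 0 2 = true → runB (mk4 b01 b02 b03 b12 b13 b23) ([2,0,1,0] : List (Fin 4)) 2 3 = runB (mk4 b01 b02 b03 b12 b13 b23) ([0,1,2] : List (Fin 4)) 2 3 := by decide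
set_option maxHeartbeats 4000000 in
lemma E5_abs_fu : ∀ b01 b02 b03 b12 b13 b23 : Bool, (mk4 b01 b02 b03 b12 b13 b23) 0 1 = true → (mk4 b01 b02 b03 b12 b13 b23) 1 2 = false → (mk4 b01 b02 b03 b12 b13 b23) 0 2 = true → runB (mk4 b01 b02 b03 b12 b13 b23) ([2,0,1,0] : List (Fin 4)) 3 0 = runB (mk4 b01 b02 b03 b12 b13 b23) ([0,1,2] : List (Fin 4)) 3 0 := by decide
set_option maxHeartbeats 4000000 in
lemma E5_abs_fw : ∀ b01 b02 b03 b12 b13 b23 : Bool, (mk4 b01 b02 b03 b12 b13 b23) 0 1 = true → (mk4 b01 b02 b03 b12 b13 b23) 1 2 = false → (mk4 b01 b02 b03 b12 b13 b23) 0 2 = true → runB (mk4 b01 b02 b03 b12 b13 b23) ([2,0,1,0] : List (Fin 4)) 3 2 = runB (mk4 b01 b02 b03 b12 b13 b23) ([0,1,2] : List (Fin 4)) 3 2 := by decide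
set_option maxHeartbeats 4000000 in
lemma E5_abs_ff : ∀ b01 b02 b03 b04 b12 b13 b14 b23 b24 b34 : Bool, (mk5 b01 b02 b03 b04 b12 b13 b14 b23 b24 b34) 0 1 = true → (mk5 b01 b02 b03 b04 b12 b13 b14 b23 b24 b34) 1 2 = false → (mk5 b01 b02 b03 b04 b12 b13 b14 b23 b24 b34) 0 2 = true → runB (mk5 b01 b02 b03 b04 b12 b13 b14 b23 b24 b34) ([2,0,1,0] : List (Fin 5)) 3 4 = runB (mk5 b01 b02 b03 b04 b12 b13 b14 b23 b24 b34) ([0,1,2] : List (Fin 5)) 3 4 := by decide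

lemma E5_pt (G : SimpleGraph V) (u v w : V) (hneuv : u ≠ v) (hneuw : u ≠ w) (hnevw : v ≠ w) (huv : G.Adj u v) (hvw : ¬ G.Adj v w) (huw : G.Adj u w) (x y : V) (hx : x ≠ v) (hy : y ≠ v) :
    (run G [w,u,v,u]).Adj x y ↔ (run G [u,v,w]).Adj x y := by
  by_cases hxy : x = y
  · rw [hxy]; exact iff_of_false (SimpleGraph.irrefl _) (SimpleGraph.irrefl _)
  by_cases hxu : x = u
  · rw [hxu]
    by_cases hyu : y = u
    · rw [hxu] at hxy; exact absurd hyu (Ne.symm hxy)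
    · by_cases hyw : y = w
      · rw [hyw]
        have he : Function.Injective (![u,v,w] : Fin 3 → V) := inj3 hneuv hneuw hnevw
        have t1 := transfer G ![u,v,w] he ([2,0,1,0] : List (Fin 3)) 0 2
        rw [show List.map (![u,v,w] : Fin 3 → V) ([2,0,1,0] : List (Fin 3)) = [w,u,v,u] from rfl, show (![u,v,w] : Fin 3 → V) 0 = u from rfl, show (![u,v,w] : Fin 3 → V) 2 = w from rfl] at t1
        have t2 := transfer G ![u,v,w] he ([0,1,2] : List (Fin 3)) 0 2
        rw [show List.map (![u,v,w] : Fin 3 → V) ([0,1,2] : List (Fin 3)) = [u,v,w] from rfl, show (![u,v,w] : Fin 3 → V) 0 = u from rfl, show (![u,v,w] : Fin 3 → V) 2 = w from rfl] at t2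
        have c0 : pb G ![u,v,w] 0 1 = true := (pb_spec G ![u,v,w] 0 1).mpr huv
        have c1 : pb G ![u,v,w] 1 2 = false := (pb_spec_not G ![u,v,w] 1 2).mpr hvw
        have c2 : pb G ![u,v,w] 0 2 = true := (pb_spec G ![u,v,w] 0 2).mpr huw
        rw [pb_eq_mk3 G ![u,v,w]] at c0 c1 c2
        rw [t1, t2, pb_eq_mk3 G ![u,v,w]]
        have habs := E5_abs_uw (pb G ![u,v,w] 0 1) (pb G ![u,v,w] 0 2) (pb G ![u,v,w] 1 2) c0 c1 c2
        rw [habs]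
      · have he : Function.Injective (![u,v,w,y] : Fin 4 → V) := inj4 hneuv hneuw (Ne.symm hyu) hnevw (Ne.symm hy) (Ne.symm hyw)
        have t1 := transfer G ![u,v,w,y] he ([2,0,1,0] : List (Fin 4)) 0 3
        rw [show List.map (![u,v,w,y] : Fin 4 → V) ([2,0,1,0] : List (Fin 4)) = [w,u,v,u] from rfl, show (![u,v,w,y] : Fin 4 → V) 0 = u from rfl, show (![u,v,w,y] : Fin 4 → V) 3 = y from rfl] at t1
        have t2 := transfer G ![u,v,w,y] he ([0,1,2] : List (Fin 4)) 0 3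
        rw [show List.map (![u,v,w,y] : Fin 4 → V) ([0,1,2] : List (Fin 4)) = [u,v,w] from rfl, show (![u,v,w,y] : Fin 4 → V) 0 = u from rfl, show (![u,v,w,y] : Fin 4 → V) 3 = y from rfl] at t2
        have c0 : pb G ![u,v,w,y] 0 1 = true := (pb_spec G ![u,v,w,y] 0 1).mpr huv
        have c1 : pb G ![u,v,w,y] 1 2 = false := (pb_spec_not G ![u,v,w,y] 1 2).mpr hvw
        have c2 : pb G ![u,v,w,y] 0 2 = true := (pb_spec G ![u,v,w,y] 0 2).mpr huw
        rw [pb_eq_mk4 G ![u,v,w,y]] at c0 c1 c2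
        rw [t1, t2, pb_eq_mk4 G ![u,v,w,y]]
        have habs := E5_abs_uf (pb G ![u,v,w,y] 0 1) (pb G ![u,v,w,y] 0 2) (pb G ![u,v,w,y] 0 3) (pb G ![u,v,w,y] 1 2) (pb G ![u,v,w,y] 1 3) (pb G ![u,v,w,y] 2 3) c0 c1 c2
        rw [habs]
  · by_cases hxw : x = w
    · rw [hxw]
      by_cases hyu : y = u
      · rw [hyu]
        have he : Function.Injective (![u,v,w] : Fin 3 → V) := inj3 hneuv hneuw hnevw
        have t1 := transfer G ![u,v,w] he ([2,0,1,0] : List (Fin 3)) 2 0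
        rw [show List.map (![u,v,w] : Fin 3 → V) ([2,0,1,0] : List (Fin 3)) = [w,u,v,u] from rfl, show (![u,v,w] : Fin 3 → V) 2 = w from rfl, show (![u,v,w] : Fin 3 → V) 0 = u from rfl] at t1
        have t2 := transfer G ![u,v,w] he ([0,1,2] : List (Fin 3)) 2 0
        rw [show List.map (![u,v,w] : Fin 3 → V) ([0,1,2] : List (Fin 3)) = [u,v,w] from rfl, show (![u,v,w] : Fin 3 → V) 2 = w from rfl, show (![u,v,w] : Fin 3 → V) 0 = u from rfl] at t2
        have c0 : pb G ![u,v,w] 0 1 = true := (pb_spec G ![u,v,w] 0 1).mpr huv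
        have c1 : pb G ![u,v,w] 1 2 = false := (pb_spec_not G ![u,v,w] 1 2).mpr hvw
        have c2 : pb G ![u,v,w] 0 2 = true := (pb_spec G ![u,v,w] 0 2).mpr huw
        rw [pb_eq_mk3 G ![u,v,w]] at c0 c1 c2
        rw [t1, t2, pb_eq_mk3 G ![u,v,w]]
        have habs := E5_abs_wu (pb G ![u,v,w] 0 1) (pb G ![u,v,w] 0 2) (pb G ![u,v,w] 1 2) c0 c1 c2
        rw [habs]
      · by_cases hyw : y = w
        · rw [hxw] at hxy; exact absurd hyw (Ne.symm hxy)
        · have he : Function.Injective (![u,v,w,y] : Fin 4 → V) := inj4 hneuv hneuw (Ne.symm hyu) hnevw (Ne.symm hy) (Ne.symm hyw)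
          have t1 := transfer G ![u,v,w,y] he ([2,0,1,0] : List (Fin 4)) 2 3
          rw [show List.map (![u,v,w,y] : Fin 4 → V) ([2,0,1,0] : List (Fin 4)) = [w,u,v,u] from rfl, show (![u,v,w,y] : Fin 4 → V) 2 = w from rfl, show (![u,v,w,y] : Fin 4 → V) 3 = y from rfl] at t1
          have t2 := transfer G ![u,v,w,y] he ([0,1,2] : List (Fin 4)) 2 3
          rw [show List.map (![u,v,w,y] : Fin 4 → V) ([0,1,2] : List (Fin 4)) = [u,v,w] from rfl, show (![u,v,w,y] : Fin 4 → V) 2 = w from rfl, show (![u,v,w,y] : Fin 4 → V) 3 = y from rfl] at t2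
          have c0 : pb G ![u,v,w,y] 0 1 = true := (pb_spec G ![u,v,w,y] 0 1).mpr huv
          have c1 : pb G ![u,v,w,y] 1 2 = false := (pb_spec_not G ![u,v,w,y] 1 2).mpr hvw
          have c2 : pb G ![u,v,w,y] 0 2 = true := (pb_spec G ![u,v,w,y] 0 2).mpr huw
          rw [pb_eq_mk4 G ![u,v,w,y]] at c0 c1 c2
          rw [t1, t2, pb_eq_mk4 G ![u,v,w,y]]
          have habs := E5_abs_wf (pb G ![u,v,w,y] 0 1) (pb G ![u,v,w,y] 0 2) (pb G ![u,v,w,y] 0 3) (pb G ![u,v,w,y] 1 2) (pb G ![u,v,w,y] 1 3) (pb G ![u,v,w,y] 2 3) c0 c1 c2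
          rw [habs]
    · by_cases hyu : y = u
      · rw [hyu]
        have he : Function.Injective (![u,v,w,x] : Fin 4 → V) := inj4 hneuv hneuw (Ne.symm hxu) hnevw (Ne.symm hx) (Ne.symm hxw)
        have t1 := transfer G ![u,v,w,x] he ([2,0,1,0] : List (Fin 4)) 3 0
        rw [show List.map (![u,v,w,x] : Fin 4 → V) ([2,0,1,0] : List (Fin 4)) = [w,u,v,u] from rfl, show (![u,v,w,x] : Fin 4 → V) 3 = x from rfl, show (![u,v,w,x] : Fin 4 → V) 0 = u from rfl] at t1
        have t2 := transfer G ![u,v,w,x] he ([0,1,2] : List (Fin 4)) 3 0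
        rw [show List.map (![u,v,w,x] : Fin 4 → V) ([0,1,2] : List (Fin 4)) = [u,v,w] from rfl, show (![u,v,w,x] : Fin 4 → V) 3 = x from rfl, show (![u,v,w,x] : Fin 4 → V) 0 = u from rfl] at t2
        have c0 : pb G ![u,v,w,x] 0 1 = true := (pb_spec G ![u,v,w,x] 0 1).mpr huv
        have c1 : pb G ![u,v,w,x] 1 2 = false := (pb_spec_not G ![u,v,w,x] 1 2).mpr hvw
        have c2 : pb G ![u,v,w,x] 0 2 = true := (pb_spec G ![u,v,w,x] 0 2).mpr huw
        rw [pb_eq_mk4 G ![u,v,w,x]] at c0 c1 c2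
        rw [t1, t2, pb_eq_mk4 G ![u,v,w,x]]
        have habs := E5_abs_fu (pb G ![u,v,w,x] 0 1) (pb G ![u,v,w,x] 0 2) (pb G ![u,v,w,x] 0 3) (pb G ![u,v,w,x] 1 2) (pb G ![u,v,w,x] 1 3) (pb G ![u,v,w,x] 2 3) c0 c1 c2
        rw [habs]
      · by_cases hyw : y = w
        · rw [hyw]
          have he : Function.Injective (![u,v,w,x] : Fin 4 → V) := inj4 hneuv hneuw (Ne.symm hxu) hnevw (Ne.symm hx) (Ne.symm hxw)
          have t1 := transfer G ![u,v,w,x] he ([2,0,1,0] : List (Fin 4)) 3 2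
          rw [show List.map (![u,v,w,x] : Fin 4 → V) ([2,0,1,0] : List (Fin 4)) = [w,u,v,u] from rfl, show (![u,v,w,x] : Fin 4 → V) 3 = x from rfl, show (![u,v,w,x] : Fin 4 → V) 2 = w from rfl] at t1
          have t2 := transfer G ![u,v,w,x] he ([0,1,2] : List (Fin 4)) 3 2
          rw [show List.map (![u,v,w,x] : Fin 4 → V) ([0,1,2] : List (Fin 4)) = [u,v,w] from rfl, show (![u,v,w,x] : Fin 4 → V) 3 = x from rfl, show (![u,v,w,x] : Fin 4 → V) 2 = w from rfl] at t2
          have c0 : pb G ![u,v,w,x] 0 1 = true := (pb_spec G ![u,v,w,x] 0 1).mpr huv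
          have c1 : pb G ![u,v,w,x] 1 2 = false := (pb_spec_not G ![u,v,w,x] 1 2).mpr hvw
          have c2 : pb G ![u,v,w,x] 0 2 = true := (pb_spec G ![u,v,w,x] 0 2).mpr huw
          rw [pb_eq_mk4 G ![u,v,w,x]] at c0 c1 c2
          rw [t1, t2, pb_eq_mk4 G ![u,v,w,x]]
          have habs := E5_abs_fw (pb G ![u,v,w,x] 0 1) (pb G ![u,v,w,x] 0 2) (pb G ![u,v,w,x] 0 3) (pb G ![u,v,w,x] 1 2) (pb G ![u,v,w,x] 1 3) (pb G ![u,v,w,x] 2 3) c0 c1 c2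
          rw [habs]
        · have he : Function.Injective (![u,v,w,x,y] : Fin 5 → V) := inj5 hneuv hneuw (Ne.symm hxu) (Ne.symm hyu) hnevw (Ne.symm hx) (Ne.symm hy) (Ne.symm hxw) (Ne.symm hyw) hxy
          have t1 := transfer G ![u,v,w,x,y] he ([2,0,1,0] : List (Fin 5)) 3 4
          rw [show List.map (![u,v,w,x,y] : Fin 5 → V) ([2,0,1,0] : List (Fin 5)) = [w,u,v,u] from rfl, show (![u,v,w,x,y] : Fin 5 → V) 3 = x from rfl, show (![u,v,w,x,y] : Fin 5 → V) 4 = y from rfl] at t1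
          have t2 := transfer G ![u,v,w,x,y] he ([0,1,2] : List (Fin 5)) 3 4
          rw [show List.map (![u,v,w,x,y] : Fin 5 → V) ([0,1,2] : List (Fin 5)) = [u,v,w] from rfl, show (![u,v,w,x,y] : Fin 5 → V) 3 = x from rfl, show (![u,v,w,x,y] : Fin 5 → V) 4 = y from rfl] at t2
          have c0 : pb G ![u,v,w,x,y] 0 1 = true := (pb_spec G ![u,v,w,x,y] 0 1).mpr huv
          have c1 : pb G ![u,v,w,x,y] 1 2 = false := (pb_spec_not G ![u,v,w,x,y] 1 2).mpr hvw
          have c2 : pb G ![u,v,w,x,y] 0 2 = true := (pb_spec G ![u,v,w,x,y] 0 2).mpr huw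
          rw [pb_eq_mk5 G ![u,v,w,x,y]] at c0 c1 c2
          rw [t1, t2, pb_eq_mk5 G ![u,v,w,x,y]]
          have habs := E5_abs_ff (pb G ![u,v,w,x,y] 0 1) (pb G ![u,v,w,x,y] 0 2) (pb G ![u,v,w,x,y] 0 3) (pb G ![u,v,w,x,y] 0 4) (pb G ![u,v,w,x,y] 1 2) (pb G ![u,v,w,x,y] 1 3) (pb G ![u,v,w,x,y] 1 4) (pb G ![u,v,w,x,y] 2 3) (pb G ![u,v,w,x,y] 2 4) (pb G ![u,v,w,x,y] 3 4) c0 c1 c2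
          rw [habs]

lemma E5_eqd (G : SimpleGraph V) (u v w : V) (hneuv : u ≠ v) (hneuw : u ≠ w) (hnevw : v ≠ w) (huv : G.Adj u v) (hvw : ¬ G.Adj v w) (huw : G.Adj u w) :
    delv v (run G [w,u,v,u]) = delv v (run G [u,v,w]) := by
  ext x y
  rw [delv_adj, delv_adj]
  constructor
  · rintro ⟨h, hx, hy⟩; exact ⟨(E5_pt G u v w hneuv hneuw hnevw huv hvw huw x y hx hy).mp h, hx, hy⟩
  · rintro ⟨h, hx, hy⟩; exact ⟨(E5_pt G u v w hneuv hneuw hnevw huv hvw huw x y hx hy).mpr h, hx, hy⟩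


set_option maxHeartbeats 4000000 in
lemma E6_abs_uw : ∀ b01 b02 b12 : Bool, (mk3 b01 b02 b12) 1 2 = true → lcB (mk3 b01 b02 b12) 2 1 0 = true → runB (mk3 b01 b02 b12) ([2,0,1,0] : List (Fin 3)) 0 2 = runB (mk3 b01 b02 b12) ([1,0,2] : List (Fin 3)) 0 2 := by decide
set_option maxHeartbeats 4000000 in
lemma E6_abs_uf : ∀ b01 b02 b03 b12 b13 b23 : Bool, (mk4 b01 b02 b03 b12 b13 b23) 1 2 = true → lcB (mk4 b01 b02 b03 b12 b13 b23) 2 1 0 = true → runB (mk4 b01 b02 b03 b12 b13 b23) ([2,0,1,0] : List (Fin 4)) 0 3 = runB (mk4 b01 b02 b03 b12 b13 b23) ([1,0,2] : List (Fin 4)) 0 3 := by decide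
set_option maxHeartbeats 4000000 in
lemma E6_abs_wu : ∀ b01 b02 b12 : Bool, (mk3 b01 b02 b12) 1 2 = true → lcB (mk3 b01 b02 b12) 2 1 0 = true → runB (mk3 b01 b02 b12) ([2,0,1,0] : List (Fin 3)) 2 0 = runB (mk3 b01 b02 b12) ([1,0,2] : List (Fin 3)) 2 0 := by decide
set_option maxHeartbeats 4000000 in
lemma E6_abs_wf : ∀ b01 b02 b03 b12 b13 b23 : Bool, (mk4 b01 b02 b03 b12 b13 b23) 1 2 = true → lcB (mk4 b01 b02 b03 b12 b13 b23) 2 1 0 = true → runB (mk4 b01 b02 b03 b12 b13 b23) ([2,0,1,0] : List (Fin 4)) 2 3 = runB (mk4 b01 b02 b03 b12 b13 b23) ([1,0,2] : List (Fin 4)) 2 3 := by decide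
set_option maxHeartbeats 4000000 in
lemma E6_abs_fu : ∀ b01 b02 b03 b12 b13 b23 : Bool, (mk4 b01 b02 b03 b12 b13 b23) 1 2 = true → lcB (mk4 b01 b02 b03 b12 b13 b23) 2 1 0 = true → runB (mk4 b01 b02 b03 b12 b13 b23) ([2,0,1,0] : List (Fin 4)) 3 0 = runB (mk4 b01 b02 b03 b12 b13 b23) ([1,0,2] : List (Fin 4)) 3 0 := by decide
set_option maxHeartbeats 4000000 in
lemma E6_abs_fw : ∀ b01 b02 b03 b12 b13 b23 : Bool, (mk4 b01 b02 b03 b12 b13 b23) 1 2 = true → lcB (mk4 b01 b02 b03 b12 b13 b23) 2 1 0 = true → runB (mk4 b01 b02 b03 b12 b13 b23) ([2,0,1,0] : List (Fin 4)) 3 2 = runB (mk4 b01 b02 b03 b12 b13 b23) ([1,0,2] : List (Fin 4)) 3 2 := by decide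
set_option maxHeartbeats 4000000 in
lemma E6_abs_ff : ∀ b01 b02 b03 b04 b12 b13 b14 b23 b24 b34 : Bool, (mk5 b01 b02 b03 b04 b12 b13 b14 b23 b24 b34) 1 2 = true → lcB (mk5 b01 b02 b03 b04 b12 b13 b14 b23 b24 b34) 2 1 0 = true → runB (mk5 b01 b02 b03 b04 b12 b13 b14 b23 b24 b34) ([2,0,1,0] : List (Fin 5)) 3 4 = runB (mk5 b01 b02 b03 b04 b12 b13 b14 b23 b24 b34) ([1,0,2] : List (Fin 5)) 3 4 := by decide

lemma E6_pt (G : SimpleGraph V) (u v w : V) (hneuv : u ≠ v) (hneuw : u ≠ w) (hnevw : v ≠ w) (hvw : G.Adj v w) (hlcwvu : (localComp G w).Adj v u) (x y : V) (hx : x ≠ v) (hy : y ≠ v) :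
    (run G [w,u,v,u]).Adj x y ↔ (run G [v,u,w]).Adj x y := by
  by_cases hxy : x = y
  · rw [hxy]; exact iff_of_false (SimpleGraph.irrefl _) (SimpleGraph.irrefl _)
  by_cases hxu : x = u
  · rw [hxu]
    by_cases hyu : y = u
    · rw [hxu] at hxy; exact absurd hyu (Ne.symm hxy)
    · by_cases hyw : y = w
      · rw [hyw]
        have he : Function.Injective (![u,v,w] : Fin 3 → V) := inj3 hneuv hneuw hnevw
        have t1 := transfer G ![u,v,w] he ([2,0,1,0] : List (Fin 3)) 0 2
        rw [show List.map (![u,v,w] : Fin 3 → V) ([2,0,1,0] : List (Fin 3)) = [w,u,v,u] from rfl, show (![u,v,w] : Fin 3 → V) 0 = u from rfl, show (![u,v,w] : Fin 3 → V) 2 = w from rfl] at t1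
        have t2 := transfer G ![u,v,w] he ([1,0,2] : List (Fin 3)) 0 2
        rw [show List.map (![u,v,w] : Fin 3 → V) ([1,0,2] : List (Fin 3)) = [v,u,w] from rfl, show (![u,v,w] : Fin 3 → V) 0 = u from rfl, show (![u,v,w] : Fin 3 → V) 2 = w from rfl] at t2
        have c0 : pb G ![u,v,w] 1 2 = true := (pb_spec G ![u,v,w] 1 2).mpr hvw
        have c1 : lcB (pb G ![u,v,w]) 2 1 0 = true := by rw [← pb_lc G ![u,v,w] he 2]; exact (pb_spec (localComp G w) ![u,v,w] 1 0).mpr hlcwvu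
        rw [pb_eq_mk3 G ![u,v,w]] at c0 c1
        rw [t1, t2, pb_eq_mk3 G ![u,v,w]]
        have habs := E6_abs_uw (pb G ![u,v,w] 0 1) (pb G ![u,v,w] 0 2) (pb G ![u,v,w] 1 2) c0 c1
        rw [habs]
      · have he : Function.Injective (![u,v,w,y] : Fin 4 → V) := inj4 hneuv hneuw (Ne.symm hyu) hnevw (Ne.symm hy) (Ne.symm hyw)
        have t1 := transfer G ![u,v,w,y] he ([2,0,1,0] : List (Fin 4)) 0 3
        rw [show List.map (![u,v,w,y] : Fin 4 → V) ([2,0,1,0] : List (Fin 4)) = [w,u,v,u] from rfl, show (![u,v,w,y] : Fin 4 → V) 0 = u from rfl, show (![u,v,w,y] : Fin 4 → V) 3 = y from rfl] at t1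
        have t2 := transfer G ![u,v,w,y] he ([1,0,2] : List (Fin 4)) 0 3
        rw [show List.map (![u,v,w,y] : Fin 4 → V) ([1,0,2] : List (Fin 4)) = [v,u,w] from rfl, show (![u,v,w,y] : Fin 4 → V) 0 = u from rfl, show (![u,v,w,y] : Fin 4 → V) 3 = y from rfl] at t2
        have c0 : pb G ![u,v,w,y] 1 2 = true := (pb_spec G ![u,v,w,y] 1 2).mpr hvw
        have c1 : lcB (pb G ![u,v,w,y]) 2 1 0 = true := by rw [← pb_lc G ![u,v,w,y] he 2]; exact (pb_spec (localComp G w) ![u,v,w,y] 1 0).mpr hlcwvu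
        rw [pb_eq_mk4 G ![u,v,w,y]] at c0 c1
        rw [t1, t2, pb_eq_mk4 G ![u,v,w,y]]
        have habs := E6_abs_uf (pb G ![u,v,w,y] 0 1) (pb G ![u,v,w,y] 0 2) (pb G ![u,v,w,y] 0 3) (pb G ![u,v,w,y] 1 2) (pb G ![u,v,w,y] 1 3) (pb G ![u,v,w,y] 2 3) c0 c1
        rw [habs]
  · by_cases hxw : x = w
    · rw [hxw]
      by_cases hyu : y = u
      · rw [hyu]
        have he : Function.Injective (![u,v,w] : Fin 3 → V) := inj3 hneuv hneuw hnevw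
        have t1 := transfer G ![u,v,w] he ([2,0,1,0] : List (Fin 3)) 2 0
        rw [show List.map (![u,v,w] : Fin 3 → V) ([2,0,1,0] : List (Fin 3)) = [w,u,v,u] from rfl, show (![u,v,w] : Fin 3 → V) 2 = w from rfl, show (![u,v,w] : Fin 3 → V) 0 = u from rfl] at t1
        have t2 := transfer G ![u,v,w] he ([1,0,2] : List (Fin 3)) 2 0
        rw [show List.map (![u,v,w] : Fin 3 → V) ([1,0,2] : List (Fin 3)) = [v,u,w] from rfl, show (![u,v,w] : Fin 3 → V) 2 = w from rfl, show (![u,v,w] : Fin 3 → V) 0 = u from rfl] at t2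
        have c0 : pb G ![u,v,w] 1 2 = true := (pb_spec G ![u,v,w] 1 2).mpr hvw
        have c1 : lcB (pb G ![u,v,w]) 2 1 0 = true := by rw [← pb_lc G ![u,v,w] he 2]; exact (pb_spec (localComp G w) ![u,v,w] 1 0).mpr hlcwvu
        rw [pb_eq_mk3 G ![u,v,w]] at c0 c1
        rw [t1, t2, pb_eq_mk3 G ![u,v,w]]
        have habs := E6_abs_wu (pb G ![u,v,w] 0 1) (pb G ![u,v,w] 0 2) (pb G ![u,v,w] 1 2) c0 c1
        rw [habs]
      · by_cases hyw : y = w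
        · rw [hxw] at hxy; exact absurd hyw (Ne.symm hxy)
        · have he : Function.Injective (![u,v,w,y] : Fin 4 → V) := inj4 hneuv hneuw (Ne.symm hyu) hnevw (Ne.symm hy) (Ne.symm hyw)
          have t1 := transfer G ![u,v,w,y] he ([2,0,1,0] : List (Fin 4)) 2 3
          rw [show List.map (![u,v,w,y] : Fin 4 → V) ([2,0,1,0] : List (Fin 4)) = [w,u,v,u] from rfl, show (![u,v,w,y] : Fin 4 → V) 2 = w from rfl, show (![u,v,w,y] : Fin 4 → V) 3 = y from rfl] at t1
          have t2 := transfer G ![u,v,w,y] he ([1,0,2] : List (Fin 4)) 2 3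
          rw [show List.map (![u,v,w,y] : Fin 4 → V) ([1,0,2] : List (Fin 4)) = [v,u,w] from rfl, show (![u,v,w,y] : Fin 4 → V) 2 = w from rfl, show (![u,v,w,y] : Fin 4 → V) 3 = y from rfl] at t2
          have c0 : pb G ![u,v,w,y] 1 2 = true := (pb_spec G ![u,v,w,y] 1 2).mpr hvw
          have c1 : lcB (pb G ![u,v,w,y]) 2 1 0 = true := by rw [← pb_lc G ![u,v,w,y] he 2]; exact (pb_spec (localComp G w) ![u,v,w,y] 1 0).mpr hlcwvu
          rw [pb_eq_mk4 G ![u,v,w,y]] at c0 c1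
          rw [t1, t2, pb_eq_mk4 G ![u,v,w,y]]
          have habs := E6_abs_wf (pb G ![u,v,w,y] 0 1) (pb G ![u,v,w,y] 0 2) (pb G ![u,v,w,y] 0 3) (pb G ![u,v,w,y] 1 2) (pb G ![u,v,w,y] 1 3) (pb G ![u,v,w,y] 2 3) c0 c1
          rw [habs]
    · by_cases hyu : y = u
      · rw [hyu]
        have he : Function.Injective (![u,v,w,x] : Fin 4 → V) := inj4 hneuv hneuw (Ne.symm hxu) hnevw (Ne.symm hx) (Ne.symm hxw)
        have t1 := transfer G ![u,v,w,x] he ([2,0,1,0] : List (Fin 4)) 3 0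
        rw [show List.map (![u,v,w,x] : Fin 4 → V) ([2,0,1,0] : List (Fin 4)) = [w,u,v,u] from rfl, show (![u,v,w,x] : Fin 4 → V) 3 = x from rfl, show (![u,v,w,x] : Fin 4 → V) 0 = u from rfl] at t1
        have t2 := transfer G ![u,v,w,x] he ([1,0,2] : List (Fin 4)) 3 0
        rw [show List.map (![u,v,w,x] : Fin 4 → V) ([1,0,2] : List (Fin 4)) = [v,u,w] from rfl, show (![u,v,w,x] : Fin 4 → V) 3 = x from rfl, show (![u,v,w,x] : Fin 4 → V) 0 = u from rfl] at t2
        have c0 : pb G ![u,v,w,x] 1 2 = true := (pb_spec G ![u,v,w,x] 1 2).mpr hvw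
        have c1 : lcB (pb G ![u,v,w,x]) 2 1 0 = true := by rw [← pb_lc G ![u,v,w,x] he 2]; exact (pb_spec (localComp G w) ![u,v,w,x] 1 0).mpr hlcwvu
        rw [pb_eq_mk4 G ![u,v,w,x]] at c0 c1
        rw [t1, t2, pb_eq_mk4 G ![u,v,w,x]]
        have habs := E6_abs_fu (pb G ![u,v,w,x] 0 1) (pb G ![u,v,w,x] 0 2) (pb G ![u,v,w,x] 0 3) (pb G ![u,v,w,x] 1 2) (pb G ![u,v,w,x] 1 3) (pb G ![u,v,w,x] 2 3) c0 c1
        rw [habs]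
      · by_cases hyw : y = w
        · rw [hyw]
          have he : Function.Injective (![u,v,w,x] : Fin 4 → V) := inj4 hneuv hneuw (Ne.symm hxu) hnevw (Ne.symm hx) (Ne.symm hxw)
          have t1 := transfer G ![u,v,w,x] he ([2,0,1,0] : List (Fin 4)) 3 2
          rw [show List.map (![u,v,w,x] : Fin 4 → V) ([2,0,1,0] : List (Fin 4)) = [w,u,v,u] from rfl, show (![u,v,w,x] : Fin 4 → V) 3 = x from rfl, show (![u,v,w,x] : Fin 4 → V) 2 = w from rfl] at t1
          have t2 := transfer G ![u,v,w,x] he ([1,0,2] : List (Fin 4)) 3 2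
          rw [show List.map (![u,v,w,x] : Fin 4 → V) ([1,0,2] : List (Fin 4)) = [v,u,w] from rfl, show (![u,v,w,x] : Fin 4 → V) 3 = x from rfl, show (![u,v,w,x] : Fin 4 → V) 2 = w from rfl] at t2
          have c0 : pb G ![u,v,w,x] 1 2 = true := (pb_spec G ![u,v,w,x] 1 2).mpr hvw
          have c1 : lcB (pb G ![u,v,w,x]) 2 1 0 = true := by rw [← pb_lc G ![u,v,w,x] he 2]; exact (pb_spec (localComp G w) ![u,v,w,x] 1 0).mpr hlcwvu
          rw [pb_eq_mk4 G ![u,v,w,x]] at c0 c1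
          rw [t1, t2, pb_eq_mk4 G ![u,v,w,x]]
          have habs := E6_abs_fw (pb G ![u,v,w,x] 0 1) (pb G ![u,v,w,x] 0 2) (pb G ![u,v,w,x] 0 3) (pb G ![u,v,w,x] 1 2) (pb G ![u,v,w,x] 1 3) (pb G ![u,v,w,x] 2 3) c0 c1
          rw [habs]
        · have he : Function.Injective (![u,v,w,x,y] : Fin 5 → V) := inj5 hneuv hneuw (Ne.symm hxu) (Ne.symm hyu) hnevw (Ne.symm hx) (Ne.symm hy) (Ne.symm hxw) (Ne.symm hyw) hxy
          have t1 := transfer G ![u,v,w,x,y] he ([2,0,1,0] : List (Fin 5)) 3 4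
          rw [show List.map (![u,v,w,x,y] : Fin 5 → V) ([2,0,1,0] : List (Fin 5)) = [w,u,v,u] from rfl, show (![u,v,w,x,y] : Fin 5 → V) 3 = x from rfl, show (![u,v,w,x,y] : Fin 5 → V) 4 = y from rfl] at t1
          have t2 := transfer G ![u,v,w,x,y] he ([1,0,2] : List (Fin 5)) 3 4
          rw [show List.map (![u,v,w,x,y] : Fin 5 → V) ([1,0,2] : List (Fin 5)) = [v,u,w] from rfl, show (![u,v,w,x,y] : Fin 5 → V) 3 = x from rfl, show (![u,v,w,x,y] : Fin 5 → V) 4 = y from rfl] at t2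
          have c0 : pb G ![u,v,w,x,y] 1 2 = true := (pb_spec G ![u,v,w,x,y] 1 2).mpr hvw
          have c1 : lcB (pb G ![u,v,w,x,y]) 2 1 0 = true := by rw [← pb_lc G ![u,v,w,x,y] he 2]; exact (pb_spec (localComp G w) ![u,v,w,x,y] 1 0).mpr hlcwvu
          rw [pb_eq_mk5 G ![u,v,w,x,y]] at c0 c1
          rw [t1, t2, pb_eq_mk5 G ![u,v,w,x,y]]
          have habs := E6_abs_ff (pb G ![u,v,w,x,y] 0 1) (pb G ![u,v,w,x,y] 0 2) (pb G ![u,v,w,x,y] 0 3) (pb G ![u,v,w,x,y] 0 4) (pb G ![u,v,w,x,y] 1 2) (pb G ![u,v,w,x,y] 1 3) (pb G ![u,v,w,x,y] 1 4) (pb G ![u,v,w,x,y] 2 3) (pb G ![u,v,w,x,y] 2 4) (pb G ![u,v,w,x,y] 3 4) c0 c1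
          rw [habs]

lemma E6_eqd (G : SimpleGraph V) (u v w : V) (hneuv : u ≠ v) (hneuw : u ≠ w) (hnevw : v ≠ w) (hvw : G.Adj v w) (hlcwvu : (localComp G w).Adj v u) :
    delv v (run G [w,u,v,u]) = delv v (run G [v,u,w]) := by
  ext x y
  rw [delv_adj, delv_adj]
  constructor
  · rintro ⟨h, hx, hy⟩; exact ⟨(E6_pt G u v w hneuv hneuw hnevw hvw hlcwvu x y hx hy).mp h, hx, hy⟩
  · rintro ⟨h, hx, hy⟩; exact ⟨(E6_pt G u v w hneuv hneuw hnevw hvw hlcwvu x y hx hy).mpr h, hx, hy⟩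


set_option maxHeartbeats 4000000 in
lemma C1b_abs_ff : ∀ b01 b02 b12 : Bool, (mk3 b01 b02 b12) 0 1 = false → (mk3 b01 b02 b12) 0 2 = false → runB (mk3 b01 b02 b12) ([0] : List (Fin 3)) 1 2 = (mk3 b01 b02 b12) 1 2 := by decide

lemma C1b_pt (G : SimpleGraph V) (v : V)  (x y : V) (hvx : ¬ G.Adj v x) (hvy : ¬ G.Adj v y) (hxy : x ≠ y) (hxv : x ≠ v) (hyv : y ≠ v) :
    (run G [v]).Adj x y ↔ G.Adj x y := by
  have he : Function.Injective (![v,x,y] : Fin 3 → V) := inj3 (Ne.symm hxv) (Ne.symm hyv) hxy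
  have t1 := transfer G ![v,x,y] he ([0] : List (Fin 3)) 1 2
  rw [show List.map (![v,x,y] : Fin 3 → V) ([0] : List (Fin 3)) = [v] from rfl, show (![v,x,y] : Fin 3 → V) 1 = x from rfl, show (![v,x,y] : Fin 3 → V) 2 = y from rfl] at t1
  have c0 : pb G ![v,x,y] 0 1 = false := (pb_spec_not G ![v,x,y] 0 1).mpr hvx
  have c1 : pb G ![v,x,y] 0 2 = false := (pb_spec_not G ![v,x,y] 0 2).mpr hvy
  rw [pb_eq_mk3 G ![v,x,y]] at c0 c1
  rw [t1, pb_eq_mk3 G ![v,x,y]]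
  have habs := C1b_abs_ff (pb G ![v,x,y] 0 1) (pb G ![v,x,y] 0 2) (pb G ![v,x,y] 1 2) c0 c1
  rw [habs, ← pb_eq_mk3 G ![v,x,y]]
  exact pb_spec G ![v,x,y] 1 2


set_option maxHeartbeats 4000000 in
lemma C2_abs_ff : ∀ b01 b02 b03 b12 b13 b23 : Bool, (mk4 b01 b02 b03 b12 b13 b23) 0 1 = true → (mk4 b01 b02 b03 b12 b13 b23) 1 2 = false → (mk4 b01 b02 b03 b12 b13 b23) 1 3 = false → runB (mk4 b01 b02 b03 b12 b13 b23) ([0,1] : List (Fin 4)) 2 3 = (mk4 b01 b02 b03 b12 b13 b23) 2 3 := by decide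

lemma C2_pt (G : SimpleGraph V) (v w : V) (hnevw : v ≠ w) (hvw : G.Adj v w) (x y : V) (hwx : ¬ G.Adj w x) (hwy : ¬ G.Adj w y) (hxy : x ≠ y) (hxv : x ≠ v) (hyv : y ≠ v) (hxw : x ≠ w) (hyw : y ≠ w) :
    (run G [v,w]).Adj x y ↔ G.Adj x y := by
  have he : Function.Injective (![v,w,x,y] : Fin 4 → V) := inj4 hnevw (Ne.symm hxv) (Ne.symm hyv) (Ne.symm hxw) (Ne.symm hyw) hxy
  have t1 := transfer G ![v,w,x,y] he ([0,1] : List (Fin 4)) 2 3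
  rw [show List.map (![v,w,x,y] : Fin 4 → V) ([0,1] : List (Fin 4)) = [v,w] from rfl, show (![v,w,x,y] : Fin 4 → V) 2 = x from rfl, show (![v,w,x,y] : Fin 4 → V) 3 = y from rfl] at t1
  have c0 : pb G ![v,w,x,y] 0 1 = true := (pb_spec G ![v,w,x,y] 0 1).mpr hvw
  have c1 : pb G ![v,w,x,y] 1 2 = false := (pb_spec_not G ![v,w,x,y] 1 2).mpr hwx
  have c2 : pb G ![v,w,x,y] 1 3 = false := (pb_spec_not G ![v,w,x,y] 1 3).mpr hwy
  rw [pb_eq_mk4 G ![v,w,x,y]] at c0 c1 c2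
  rw [t1, pb_eq_mk4 G ![v,w,x,y]]
  have habs := C2_abs_ff (pb G ![v,w,x,y] 0 1) (pb G ![v,w,x,y] 0 2) (pb G ![v,w,x,y] 0 3) (pb G ![v,w,x,y] 1 2) (pb G ![v,w,x,y] 1 3) (pb G ![v,w,x,y] 2 3) c0 c1 c2
  rw [habs, ← pb_eq_mk4 G ![v,w,x,y]]
  exact pb_spec G ![v,w,x,y] 2 3


set_option maxHeartbeats 4000000 in
lemma C3a_abs_ff : ∀ b01 b02 b03 b12 b13 b23 : Bool, (mk4 b01 b02 b03 b12 b13 b23) 0 1 = true → (mk4 b01 b02 b03 b12 b13 b23) 0 2 = false → (mk4 b01 b02 b03 b12 b13 b23) 0 3 = false → runB (mk4 b01 b02 b03 b12 b13 b23) ([0,1,0] : List (Fin 4)) 2 3 = (mk4 b01 b02 b03 b12 b13 b23) 2 3 := by decide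

lemma C3a_pt (G : SimpleGraph V) (u v : V) (hneuv : u ≠ v) (huv : G.Adj u v) (x y : V) (hux : ¬ G.Adj u x) (huy : ¬ G.Adj u y) (hxy : x ≠ y) (hxu : x ≠ u) (hyu : y ≠ u) (hxv : x ≠ v) (hyv : y ≠ v) :
    (run G [u,v,u]).Adj x y ↔ G.Adj x y := by
  have he : Function.Injective (![u,v,x,y] : Fin 4 → V) := inj4 hneuv (Ne.symm hxu) (Ne.symm hyu) (Ne.symm hxv) (Ne.symm hyv) hxy
  have t1 := transfer G ![u,v,x,y] he ([0,1,0] : List (Fin 4)) 2 3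
  rw [show List.map (![u,v,x,y] : Fin 4 → V) ([0,1,0] : List (Fin 4)) = [u,v,u] from rfl, show (![u,v,x,y] : Fin 4 → V) 2 = x from rfl, show (![u,v,x,y] : Fin 4 → V) 3 = y from rfl] at t1
  have c0 : pb G ![u,v,x,y] 0 1 = true := (pb_spec G ![u,v,x,y] 0 1).mpr huv
  have c1 : pb G ![u,v,x,y] 0 2 = false := (pb_spec_not G ![u,v,x,y] 0 2).mpr hux
  have c2 : pb G ![u,v,x,y] 0 3 = false := (pb_spec_not G ![u,v,x,y] 0 3).mpr huy
  rw [pb_eq_mk4 G ![u,v,x,y]] at c0 c1 c2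
  rw [t1, pb_eq_mk4 G ![u,v,x,y]]
  have habs := C3a_abs_ff (pb G ![u,v,x,y] 0 1) (pb G ![u,v,x,y] 0 2) (pb G ![u,v,x,y] 0 3) (pb G ![u,v,x,y] 1 2) (pb G ![u,v,x,y] 1 3) (pb G ![u,v,x,y] 2 3) c0 c1 c2
  rw [habs, ← pb_eq_mk4 G ![u,v,x,y]]
  exact pb_spec G ![u,v,x,y] 2 3


set_option maxHeartbeats 4000000 in
lemma C3b_abs_ff : ∀ b01 b02 b03 b12 b13 b23 : Bool, (mk4 b01 b02 b03 b12 b13 b23) 0 1 = true → (mk4 b01 b02 b03 b12 b13 b23) 1 2 = false → (mk4 b01 b02 b03 b12 b13 b23) 1 3 = false → runB (mk4 b01 b02 b03 b12 b13 b23) ([0,1,0] : List (Fin 4)) 2 3 = (mk4 b01 b02 b03 b12 b13 b23) 2 3 := by decide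

lemma C3b_pt (G : SimpleGraph V) (u v : V) (hneuv : u ≠ v) (huv : G.Adj u v) (x y : V) (hvx : ¬ G.Adj v x) (hvy : ¬ G.Adj v y) (hxy : x ≠ y) (hxu : x ≠ u) (hyu : y ≠ u) (hxv : x ≠ v) (hyv : y ≠ v) :
    (run G [u,v,u]).Adj x y ↔ G.Adj x y := by
  have he : Function.Injective (![u,v,x,y] : Fin 4 → V) := inj4 hneuv (Ne.symm hxu) (Ne.symm hyu) (Ne.symm hxv) (Ne.symm hyv) hxy
  have t1 := transfer G ![u,v,x,y] he ([0,1,0] : List (Fin 4)) 2 3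
  rw [show List.map (![u,v,x,y] : Fin 4 → V) ([0,1,0] : List (Fin 4)) = [u,v,u] from rfl, show (![u,v,x,y] : Fin 4 → V) 2 = x from rfl, show (![u,v,x,y] : Fin 4 → V) 3 = y from rfl] at t1
  have c0 : pb G ![u,v,x,y] 0 1 = true := (pb_spec G ![u,v,x,y] 0 1).mpr huv
  have c1 : pb G ![u,v,x,y] 1 2 = false := (pb_spec_not G ![u,v,x,y] 1 2).mpr hvx
  have c2 : pb G ![u,v,x,y] 1 3 = false := (pb_spec_not G ![u,v,x,y] 1 3).mpr hvy
  rw [pb_eq_mk4 G ![u,v,x,y]] at c0 c1 c2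
  rw [t1, pb_eq_mk4 G ![u,v,x,y]]
  have habs := C3b_abs_ff (pb G ![u,v,x,y] 0 1) (pb G ![u,v,x,y] 0 2) (pb G ![u,v,x,y] 0 3) (pb G ![u,v,x,y] 1 2) (pb G ![u,v,x,y] 1 3) (pb G ![u,v,x,y] 2 3) c0 c1 c2
  rw [habs, ← pb_eq_mk4 G ![u,v,x,y]]
  exact pb_spec G ![u,v,x,y] 2 3


set_option maxHeartbeats 4000000 in
lemma CC3c_abs_ff : ∀ b01 b02 b03 b04 b12 b13 b14 b23 b24 b34 : Bool, (mk5 b01 b02 b03 b04 b12 b13 b14 b23 b24 b34) 0 1 = true → (mk5 b01 b02 b03 b04 b12 b13 b14 b23 b24 b34) 1 2 = true → (mk5 b01 b02 b03 b04 b12 b13 b14 b23 b24 b34) 2 3 = false → (mk5 b01 b02 b03 b04 b12 b13 b14 b23 b24 b34) 2 4 = false → runB (mk5 b01 b02 b03 b04 b12 b13 b14 b23 b24 b34) ([0,1,2,0] : List (Fin 5)) 3 4 = (mk5 b01 b02 b03 b04 b12 b13 b14 b23 b24 b34) 3 4 := by decide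

lemma CC3c_pt (G : SimpleGraph V) (u v w : V) (hneuv : u ≠ v) (hneuw : u ≠ w) (hnevw : v ≠ w) (huv : G.Adj u v) (hvw : G.Adj v w) (x y : V) (hwx : ¬ G.Adj w x) (hwy : ¬ G.Adj w y) (hxy : x ≠ y) (hxu : x ≠ u) (hyu : y ≠ u) (hxv : x ≠ v) (hyv : y ≠ v) (hxw : x ≠ w) (hyw : y ≠ w) :
    (run G [u,v,w,u]).Adj x y ↔ G.Adj x y := by
  have he : Function.Injective (![u,v,w,x,y] : Fin 5 → V) := inj5 hneuv hneuw (Ne.symm hxu) (Ne.symm hyu) hnevw (Ne.symm hxv) (Ne.symm hyv) (Ne.symm hxw) (Ne.symm hyw) hxy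
  have t1 := transfer G ![u,v,w,x,y] he ([0,1,2,0] : List (Fin 5)) 3 4
  rw [show List.map (![u,v,w,x,y] : Fin 5 → V) ([0,1,2,0] : List (Fin 5)) = [u,v,w,u] from rfl, show (![u,v,w,x,y] : Fin 5 → V) 3 = x from rfl, show (![u,v,w,x,y] : Fin 5 → V) 4 = y from rfl] at t1
  have c0 : pb G ![u,v,w,x,y] 0 1 = true := (pb_spec G ![u,v,w,x,y] 0 1).mpr huv
  have c1 : pb G ![u,v,w,x,y] 1 2 = true := (pb_spec G ![u,v,w,x,y] 1 2).mpr hvw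
  have c2 : pb G ![u,v,w,x,y] 2 3 = false := (pb_spec_not G ![u,v,w,x,y] 2 3).mpr hwx
  have c3 : pb G ![u,v,w,x,y] 2 4 = false := (pb_spec_not G ![u,v,w,x,y] 2 4).mpr hwy
  rw [pb_eq_mk5 G ![u,v,w,x,y]] at c0 c1 c2 c3
  rw [t1, pb_eq_mk5 G ![u,v,w,x,y]]
  have habs := CC3c_abs_ff (pb G ![u,v,w,x,y] 0 1) (pb G ![u,v,w,x,y] 0 2) (pb G ![u,v,w,x,y] 0 3) (pb G ![u,v,w,x,y] 0 4) (pb G ![u,v,w,x,y] 1 2) (pb G ![u,v,w,x,y] 1 3) (pb G ![u,v,w,x,y] 1 4) (pb G ![u,v,w,x,y] 2 3) (pb G ![u,v,w,x,y] 2 4) (pb G ![u,v,w,x,y] 3 4) c0 c1 c2 c3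
  rw [habs, ← pb_eq_mk5 G ![u,v,w,x,y]]
  exact pb_spec G ![u,v,w,x,y] 3 4


/- ################ Local equivalence machinery ################ -/

lemma lc_lc (G : SimpleGraph V) (v : V) : localComp (localComp G v) v = G := E0_eq G v

def RS (s : Set V) (A B : SimpleGraph V) : Prop :=
  Relation.ReflTransGen (fun A B => ∃ w ∈ s, B = localComp A w) A B

lemma RS.refl {s : Set V} {A : SimpleGraph V} : RS s A A := Relation.ReflTransGen.refl

lemma RS.tail {s : Set V} {A B : SimpleGraph V} (h : RS s A B) {w : V} (hw : w ∈ s) :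
    RS s A (localComp B w) := Relation.ReflTransGen.tail h ⟨w, hw, rfl⟩

lemma RS.trans {s : Set V} {A B C : SimpleGraph V} (h1 : RS s A B) (h2 : RS s B C) :
    RS s A C := Relation.ReflTransGen.trans h1 h2

lemma RS.mono {s t : Set V} (hst : s ⊆ t) {A B : SimpleGraph V} (h : RS s A B) : RS t A B :=
  Relation.ReflTransGen.mono (fun A B ⟨w, hw, he⟩ => ⟨w, hst hw, he⟩) _ _ h

lemma RS.symm {s : Set V} {A B : SimpleGraph V} (h : RS s A B) : RS s B A := by
  induction h with
  | refl => exact RS.refl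
  | @tail b c hab hbc ih =>
      obtain ⟨w, hw, rfl⟩ := hbc
      exact RS.trans (Relation.ReflTransGen.single ⟨w, hw, (lc_lc b w).symm⟩) ih

def isolatedOff (s : Set V) (G : SimpleGraph V) : Prop := ∀ p ∉ s, ∀ x, ¬ G.Adj p x

lemma isolatedOff_lc {s : Set V} {G : SimpleGraph V} (h : isolatedOff s G) (w : V) :
    isolatedOff s (localComp G w) := by
  intro p hp x hadj
  rw [lc_adj] at hadj
  have h1 : ¬ G.Adj p x := h p hp x
  have h2 : ¬ G.Adj w p := fun hh => h p hp w hh.symm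
  tauto

lemma isolatedOff_RS {s : Set V} {A B : SimpleGraph V} (h : RS s A B)
    (hA : isolatedOff s A) : isolatedOff s B := by
  induction h with
  | refl => exact hA
  | @tail b c hab hbc ih =>
      obtain ⟨w, _, rfl⟩ := hbc
      exact isolatedOff_lc ih w

lemma delv_adj' {v x y : V} {G : SimpleGraph V} (hx : x ≠ v) (hy : y ≠ v) :
    (delv v G).Adj x y ↔ G.Adj x y := by rw [delv_adj]; simp [hx, hy]

lemma delv_lc (v : V) (G : SimpleGraph V) (w : V) (hw : w ≠ v) :
    delv v (localComp G w) = localComp (delv v G) w := by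
  ext x y
  by_cases hx : x = v <;> by_cases hy : y = v <;>
    simp_all [lc_adj, delv_adj] <;> tauto

lemma lc_adj_v_self (K : SimpleGraph V) (v u : V) :
    (localComp K v).Adj v u ↔ K.Adj v u := by
  by_cases h : K.Adj v u <;> by_cases hne : v = u <;>
    simp_all [lc_adj]

lemma lc_adj_v_other (K : SimpleGraph V) (v w u : V) (hvw : ¬ K.Adj v w) :
    (localComp K w).Adj v u ↔ K.Adj v u := by
  have h2 : ¬ K.Adj w v := fun hh => hvw hh.symm
  by_cases h : K.Adj v u <;> by_cases hne : v = u <;>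
    simp_all [lc_adj]

/- ################ The three-form (Bouchet-style) lemma ################ -/

def Reach (s : Set V) (v : V) (X T : SimpleGraph V) : Prop :=
  RS (s \ {v}) (delv v X) T ∨ RS (s \ {v}) (delv v (localComp X v)) T ∨
  ∃ u, X.Adj v u ∧ RS (s \ {v}) (delv v (run X [u,v,u])) T

lemma Reach.tail {s : Set V} {v : V} {X T : SimpleGraph V} (h : Reach s v X T)
    {w : V} (hw : w ∈ s) (hwv : w ≠ v) : Reach s v X (localComp T w) := by
  have hmem : w ∈ s \ {v} := ⟨hw, fun hh => hwv hh⟩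
  rcases h with h | h | ⟨u, hu, h⟩
  · exact Or.inl (h.tail hmem)
  · exact Or.inr (Or.inl (h.tail hmem))
  · exact Or.inr (Or.inr ⟨u, hu, h.tail hmem⟩)

lemma lemB_aux {s : Set V} {v : V} {X K : SimpleGraph V}
    (h : RS s X K) (hiso : isolatedOff s X) :
    Reach s v X (delv v K) ∧ Reach s v X (delv v (localComp K v)) ∧
      ∀ u, K.Adj v u → Reach s v X (delv v (run K [u,v,u])) := by
  induction h with
  | refl =>
      exact ⟨Or.inl RS.refl, Or.inr (Or.inl RS.refl),
        fun u hu => Or.inr (Or.inr ⟨u, hu, RS.refl⟩)⟩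
  | @tail B C hXB hbc ih =>
      obtain ⟨w, hws, rfl⟩ := hbc
      have hisoB : isolatedOff s B := isolatedOff_RS hXB hiso
      by_cases hwv : w = v
      · subst hwv
        refine ⟨ih.2.1, ?_, ?_⟩
        · rw [lc_lc]; exact ih.1
        · intro u hu
          have hu' : B.Adj w u := (lc_adj_v_self B w u).mp hu
          have huv : u ≠ w := (hu'.ne).symm
          have hus : u ∈ s := by
            by_contra hus
            exact hisoB u hus w hu'.symm
          have h3 : run B [w,u,w] = run B [u,w,u] := E3_eq B u w huv hu'.symm
          have hid : delv w (run (localComp B w) [u,w,u])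
              = localComp (delv w (run B [u,w,u])) u := by
            rw [show run (localComp B w) [u,w,u] = localComp (run B [w,u,w]) u from rfl,
              h3, delv_lc w _ u huv]
          rw [hid]
          exact Reach.tail (ih.2.2 u hu') hus huv
      · have hd1 : delv v (localComp B w) = localComp (delv v B) w := delv_lc v B w hwv
        by_cases hvw : B.Adj v w
        · -- w a neighbour of v
          refine ⟨?_, ?_, ?_⟩
          · rw [hd1]; exact Reach.tail ih.1 hws hwv
          · have hcv : localComp (run B [w,v,w]) w = run B [w,v] := by
              rw [show run B [w,v,w] = localComp (run B [w,v]) w from rfl, lc_lc]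
            rw [show delv v (localComp (localComp B w) v) = delv v (run B [w,v]) from rfl,
              ← hcv, delv_lc v _ w hwv]
            exact Reach.tail (ih.2.2 w hvw) hws hwv
          · intro u hu
            by_cases huw : u = w
            · subst huw
              have hcan : run B [u,u,v,u] = run B [v,u] := by
                rw [show run B [u,u,v,u] = run (localComp (localComp B u) u) [v,u] from rfl,
                  lc_lc]
              rw [show delv v (run (localComp B u) [u,v,u]) = delv v (run B [u,u,v,u]) from rfl,
                hcan, show run B [v,u] = localComp (localComp B v) u from rfl,
                delv_lc v _ u hwv]
              exact Reach.tail ih.2.1 hws hwv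
            · have hus : u ∈ s := by
                by_contra hus
                exact (isolatedOff_lc hisoB w) u hus v hu.symm
              have hunev : u ≠ v := (hu.ne).symm
              have he6 := E6_eqd B u v w hunev huw hvw.ne hvw hu
              rw [show delv v (run (localComp B w) [u,v,u]) = delv v (run B [w,u,v,u]) from rfl,
                he6, show run B [v,u,w] = localComp (localComp (localComp B v) u) w from rfl,
                delv_lc v _ w hwv, delv_lc v _ u hunev]
              exact Reach.tail (Reach.tail ih.2.1 hus hunev) hws hwv
        · -- w not a neighbour of v
          have hnevw : v ≠ w := fun hh => hwv hh.symm
          refine ⟨?_, ?_, ?_⟩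
          · rw [hd1]; exact Reach.tail ih.1 hws hwv
          · have he1 : run B [v,w] = run B [w,v] := E1_eq B v w hnevw hvw
            rw [show delv v (localComp (localComp B w) v) = delv v (run B [w,v]) from rfl,
              ← he1, show run B [v,w] = localComp (localComp B v) w from rfl,
              delv_lc v _ w hwv]
            exact Reach.tail ih.2.1 hws hwv
          · intro u hu
            have hu' : B.Adj v u := (lc_adj_v_other B v w u hvw).mp hu
            have hunev : u ≠ v := (hu'.ne).symm
            have hus : u ∈ s := by
              by_contra hus
              exact hisoB u hus v hu'.symm
            have huw : u ≠ w := fun hh => hvw (hh ▸ hu')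
            by_cases hbuw : B.Adj u w
            · have he5 := E5_eqd B u v w hunev huw hnevw hu'.symm hvw hbuw
              have hstep : run B [u,v,w] = localComp (localComp (run B [u,v,u]) u) w := by
                have hc : localComp (run B [u,v,u]) u = run B [u,v] := by
                  rw [show run B [u,v,u] = localComp (run B [u,v]) u from rfl, lc_lc]
                rw [hc]
                rfl
              rw [show delv v (run (localComp B w) [u,v,u]) = delv v (run B [w,u,v,u]) from rfl,
                he5, hstep, delv_lc v _ w hwv, delv_lc v _ u hunev]
              exact Reach.tail (Reach.tail (ih.2.2 u hu') hus hunev) hws hwv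
            · have he4 := E4_eqd B u v w hunev huw hnevw hu'.symm hvw hbuw
              rw [show delv v (run (localComp B w) [u,v,u]) = delv v (run B [w,u,v,u]) from rfl,
                he4, show run B [u,v,u,w] = localComp (run B [u,v,u]) w from rfl,
                delv_lc v _ w hwv]
              exact Reach.tail (ih.2.2 u hu') hws hwv

/- ################ Dropping at most one copy per deleted vertex ################ -/

def patt (H : SimpleGraph W) (k : ℕ) (emb : Fin k × W → V) (I : Finset (Fin k))
    (X : SimpleGraph V) : Prop :=
  ∀ p q : Fin k × W, p.1 ∈ I → q.1 ∈ I →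
    (X.Adj (emb p) (emb q) ↔ (p.1 = q.1 ∧ H.Adj p.2 q.2))

lemma copydrop {s : Set V} {v : V} (hv : v ∈ s) {Δ X : SimpleGraph V}
    (hRS : RS s Δ X) (hiso : isolatedOff s Δ)
    {H : SimpleGraph W} {k : ℕ} {emb : Fin k × W → V} (hinj : Function.Injective emb)
    (hS : ∀ p : Fin k × W, emb p ∈ s ∧ emb p ≠ v)
    {I : Finset (Fin k)} (hpatt : patt H k emb I X) :
    ∃ (X' : SimpleGraph V) (I' : Finset (Fin k)), I' ⊆ I ∧ I.card ≤ I'.card + 1 ∧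
      RS (s \ {v}) (delv v Δ) X' ∧ patt H k emb I' X' := by
  have hisoX : isolatedOff s X := isolatedOff_RS hRS hiso
  have hreach : Reach s v X (delv v Δ) := (lemB_aux (RS.symm hRS) hisoX).1
  rcases hreach with hR | hR | ⟨u, huv, hR⟩
  · -- no modification needed
    refine ⟨delv v X, I, subset_refl I, Nat.le_succ _, RS.symm hR, ?_⟩
    intro p q hp hq
    rw [delv_adj' (hS p).2 (hS q).2]
    exact hpatt p q hp hq
  · -- one local complementation at v
    by_cases hex : ∃ p : Fin k × W, p.1 ∈ I ∧ X.Adj v (emb p)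
    · obtain ⟨p₀, hp₀I, hvP⟩ := hex
      have hmem : emb p₀ ∈ s \ {v} := ⟨(hS p₀).1, fun hh => (hS p₀).2 hh⟩
      refine ⟨delv v (run X [v, emb p₀]), I.erase p₀.1, Finset.erase_subset _ _,
        le_of_eq (Finset.card_erase_add_one hp₀I).symm, ?_, ?_⟩
      · have := (RS.symm hR).tail hmem
        rw [← delv_lc v _ _ (hS p₀).2] at this
        exact this
      · intro p q hp hq
        have hpI : p.1 ∈ I := Finset.mem_of_mem_erase hp
        have hqI : q.1 ∈ I := Finset.mem_of_mem_erase hq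
        have hpne : p.1 ≠ p₀.1 := Finset.ne_of_mem_erase hp
        have hqne : q.1 ≠ p₀.1 := Finset.ne_of_mem_erase hq
        by_cases hpq : p = q
        · subst hpq
          exact iff_of_false (SimpleGraph.irrefl _) (fun hh => H.loopless.irrefl _ hh.2)
        · have hxy : emb p ≠ emb q := fun hh => hpq (hinj hh)
          have hwx : ¬ X.Adj (emb p₀) (emb p) := fun hadj =>
            hpne (((hpatt p₀ p hp₀I hpI).mp hadj).1.symm)
          have hwy : ¬ X.Adj (emb p₀) (emb q) := fun hadj =>
            hqne (((hpatt p₀ q hp₀I hqI).mp hadj).1.symm)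
          have hxw : emb p ≠ emb p₀ := fun hh => hpne (congrArg Prod.fst (hinj hh))
          have hyw : emb q ≠ emb p₀ := fun hh => hqne (congrArg Prod.fst (hinj hh))
          rw [delv_adj' (hS p).2 (hS q).2]
          rw [C2_pt X v (emb p₀) (fun hh => (hS p₀).2 hh.symm) hvP (emb p) (emb q)
            hwx hwy hxy (hS p).2 (hS q).2 hxw hyw]
          exact hpatt p q hpI hqI
    · refine ⟨delv v (localComp X v), I, subset_refl I, Nat.le_succ _, RS.symm hR, ?_⟩
      intro p q hp hq
      by_cases hpq : p = q
      · subst hpq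
        exact iff_of_false (SimpleGraph.irrefl _) (fun hh => H.loopless.irrefl _ hh.2)
      · have hxy : emb p ≠ emb q := fun hh => hpq (hinj hh)
        have hvx : ¬ X.Adj v (emb p) := fun hh => hex ⟨p, hp, hh⟩
        have hvy : ¬ X.Adj v (emb q) := fun hh => hex ⟨q, hq, hh⟩
        rw [delv_adj' (hS p).2 (hS q).2]
        rw [show localComp X v = run X [v] from rfl]
        rw [C1b_pt X v (emb p) (emb q) hvx hvy hxy (hS p).2 (hS q).2]
        exact hpatt p q hp hq
  · -- a pivot
    have hunev : u ≠ v := (huv.ne).symm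
    have huv' : X.Adj u v := huv.symm
    by_cases hexu : ∃ p₀ : Fin k × W, p₀.1 ∈ I ∧ emb p₀ = u
    · obtain ⟨p₀, hp₀I, hpu⟩ := hexu
      refine ⟨delv v (run X [u,v,u]), I.erase p₀.1, Finset.erase_subset _ _,
        le_of_eq (Finset.card_erase_add_one hp₀I).symm, RS.symm hR, ?_⟩
      intro p q hp hq
      have hpI : p.1 ∈ I := Finset.mem_of_mem_erase hp
      have hqI : q.1 ∈ I := Finset.mem_of_mem_erase hq
      have hpne : p.1 ≠ p₀.1 := Finset.ne_of_mem_erase hp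
      have hqne : q.1 ≠ p₀.1 := Finset.ne_of_mem_erase hq
      by_cases hpq : p = q
      · subst hpq
        exact iff_of_false (SimpleGraph.irrefl _) (fun hh => H.loopless.irrefl _ hh.2)
      · have hxy : emb p ≠ emb q := fun hh => hpq (hinj hh)
        have hux : ¬ X.Adj u (emb p) := by
          rw [← hpu]
          exact fun hadj => hpne (((hpatt p₀ p hp₀I hpI).mp hadj).1.symm)
        have huy : ¬ X.Adj u (emb q) := by
          rw [← hpu]
          exact fun hadj => hqne (((hpatt p₀ q hp₀I hqI).mp hadj).1.symm)
        have hxu : emb p ≠ u := fun hh =>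
          hpne (congrArg Prod.fst (hinj (hh.trans hpu.symm)))
        have hyu : emb q ≠ u := fun hh =>
          hqne (congrArg Prod.fst (hinj (hh.trans hpu.symm)))
        rw [delv_adj' (hS p).2 (hS q).2]
        rw [C3a_pt X u v hunev huv' (emb p) (emb q) hux huy hxy hxu hyu (hS p).2 (hS q).2]
        exact hpatt p q hpI hqI
    · by_cases hexw : ∃ p₀ : Fin k × W, p₀.1 ∈ I ∧ X.Adj v (emb p₀)
      · obtain ⟨p₀, hp₀I, hvw⟩ := hexw
        have hwu : emb p₀ ≠ u := fun hh => hexu ⟨p₀, hp₀I, hh⟩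
        have hmemw : emb p₀ ∈ s \ {v} := ⟨(hS p₀).1, fun hh => (hS p₀).2 hh⟩
        have hus : u ∈ s := by
          by_contra hus
          exact hisoX u hus v huv'
        have hmemu : u ∈ s \ {v} := ⟨hus, fun hh => hunev hh⟩
        refine ⟨delv v (run X [u,v,emb p₀,u]), I.erase p₀.1, Finset.erase_subset _ _,
          le_of_eq (Finset.card_erase_add_one hp₀I).symm, ?_, ?_⟩
        · have hch := (((RS.symm hR).tail hmemu).tail hmemw).tail hmemu
          have hcan : localComp (localComp (localComp (delv v (run X [u,v,u])) u) (emb p₀)) u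
              = delv v (run X [u,v,emb p₀,u]) := by
            rw [← delv_lc v _ u hunev, ← delv_lc v _ (emb p₀) (hS p₀).2,
              ← delv_lc v _ u hunev]
            have hmid : localComp (run X [u,v,u]) u = run X [u,v] := by
              rw [show run X [u,v,u] = localComp (run X [u,v]) u from rfl, lc_lc]
            rw [show localComp (localComp (localComp (run X [u,v,u]) u) (emb p₀)) u
                = run (localComp (run X [u,v,u]) u) [emb p₀, u] from rfl, hmid]
            rfl
          rw [← hcan]
          exact hch
        · intro p q hp hq
          have hpI : p.1 ∈ I := Finset.mem_of_mem_erase hp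
          have hqI : q.1 ∈ I := Finset.mem_of_mem_erase hq
          have hpne : p.1 ≠ p₀.1 := Finset.ne_of_mem_erase hp
          have hqne : q.1 ≠ p₀.1 := Finset.ne_of_mem_erase hq
          by_cases hpq : p = q
          · subst hpq
            exact iff_of_false (SimpleGraph.irrefl _) (fun hh => H.loopless.irrefl _ hh.2)
          · have hxy : emb p ≠ emb q := fun hh => hpq (hinj hh)
            have hwx : ¬ X.Adj (emb p₀) (emb p) := fun hadj =>
              hpne (((hpatt p₀ p hp₀I hpI).mp hadj).1.symm)
            have hwy : ¬ X.Adj (emb p₀) (emb q) := fun hadj =>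
              hqne (((hpatt p₀ q hp₀I hqI).mp hadj).1.symm)
            have hxu : emb p ≠ u := fun hh => hexu ⟨p, hpI, hh⟩
            have hyu : emb q ≠ u := fun hh => hexu ⟨q, hqI, hh⟩
            have hxw : emb p ≠ emb p₀ := fun hh => hpne (congrArg Prod.fst (hinj hh))
            have hyw : emb q ≠ emb p₀ := fun hh => hqne (congrArg Prod.fst (hinj hh))
            rw [delv_adj' (hS p).2 (hS q).2]
            rw [CC3c_pt X u v (emb p₀) hunev (fun hh => hwu hh.symm)
              (fun hh => (hS p₀).2 hh.symm) huv' hvw (emb p) (emb q)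
              hwx hwy hxy hxu hyu (hS p).2 (hS q).2 hxw hyw]
            exact hpatt p q hpI hqI
      · refine ⟨delv v (run X [u,v,u]), I, subset_refl I, Nat.le_succ _, RS.symm hR, ?_⟩
        intro p q hp hq
        by_cases hpq : p = q
        · subst hpq
          exact iff_of_false (SimpleGraph.irrefl _) (fun hh => H.loopless.irrefl _ hh.2)
        · have hxy : emb p ≠ emb q := fun hh => hpq (hinj hh)
          have hvx : ¬ X.Adj v (emb p) := fun hh => hexw ⟨p, hp, hh⟩
          have hvy : ¬ X.Adj v (emb q) := fun hh => hexw ⟨q, hq, hh⟩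
          have hxu : emb p ≠ u := fun hh => hexu ⟨p, hp, hh⟩
          have hyu : emb q ≠ u := fun hh => hexu ⟨q, hq, hh⟩
          rw [delv_adj' (hS p).2 (hS q).2]
          rw [C3b_pt X u v hunev huv' (emb p) (emb q) hvx hvy hxy hxu hyu (hS p).2 (hS q).2]
          exact hpatt p q hp hq

/- ################ Iterating over the deleted vertices ################ -/

def delvList : List V → SimpleGraph V → SimpleGraph V
  | [], G => G
  | v :: l, G => delvList l (delv v G)

lemma iterdrop {H : SimpleGraph W} {k : ℕ} {emb : Fin k × W → V}
    (hinj : Function.Injective emb) :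
    ∀ (vs : List V), vs.Nodup → ∀ (s : Set V) (Δ X : SimpleGraph V),
    (∀ v ∈ vs, v ∈ s) → RS s Δ X → isolatedOff s Δ →
    (∀ p : Fin k × W, emb p ∈ s ∧ ∀ v ∈ vs, emb p ≠ v) →
    ∀ I : Finset (Fin k), patt H k emb I X →
    ∃ (X' : SimpleGraph V) (I' : Finset (Fin k)), I' ⊆ I ∧
      I.card ≤ I'.card + vs.length ∧
      RS (s \ {x | x ∈ vs}) (delvList vs Δ) X' ∧ patt H k emb I' X' := by
  intro vs
  induction vs with
  | nil =>
      intro _ s Δ X _ hRS _ _ I hpatt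
      refine ⟨X, I, subset_refl I, by simp, ?_, hpatt⟩
      exact RS.mono (fun x hx => (Set.mem_diff x).mpr ⟨hx, by simp⟩) hRS
  | cons v vs ih =>
      intro hnd s Δ X hvs hRS hiso hS I hpatt
      have hvmem : v ∈ s := hvs v (List.mem_cons_self (a := v) (l := vs))
      obtain ⟨X₁, I₁, hsub1, hcard1, hRS1, hpatt1⟩ :=
        copydrop hvmem hRS hiso hinj
          (fun p => ⟨(hS p).1, (hS p).2 v (List.mem_cons_self (a := v) (l := vs))⟩) hpatt
      have hiso' : isolatedOff (s \ {v}) (delv v Δ) := by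
        intro p hp x hadj
        rw [delv_adj] at hadj
        by_cases hpv : p = v
        · exact hadj.2.1 hpv
        · exact hiso p (fun hps => hp ⟨hps, hpv⟩) x hadj.1
      have hvs' : ∀ u ∈ vs, u ∈ s \ {v} := by
        intro u hu
        refine ⟨hvs u (List.mem_cons_of_mem v hu), fun hh => ?_⟩
        have : u = v := hh
        exact (List.nodup_cons.mp hnd).1 (this ▸ hu)
      have hS' : ∀ p : Fin k × W, emb p ∈ s \ {v} ∧ ∀ u ∈ vs, emb p ≠ u := by
        intro p
        refine ⟨⟨(hS p).1, fun hh => (hS p).2 v (List.mem_cons_self (a := v) (l := vs)) hh⟩, ?_⟩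
        exact fun u hu => (hS p).2 u (List.mem_cons_of_mem v hu)
      obtain ⟨X', I', h1, h2, h3, h4⟩ :=
        ih (List.nodup_cons.mp hnd).2 (s \ {v}) (delv v Δ) X₁ hvs' hRS1 hiso' hS' I₁ hpatt1
      refine ⟨X', I', h1.trans hsub1, ?_, ?_, h4⟩
      · have := hcard1
        have := h2
        simp only [List.length_cons]
        omega
      · refine RS.mono ?_ h3
        intro x hx
        refine ⟨hx.1.1, ?_⟩
        intro hmem
        simp only [Set.mem_setOf_eq, List.mem_cons] at hmem
        rcases hmem with h | h
        · exact hx.1.2 h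
        · exact hx.2 h

/- ################ Transferring along `Sum.inl` ################ -/

lemma comap_lc {t : ℕ} (A : SimpleGraph (V ⊕ Fin t)) (x : V) :
    SimpleGraph.comap Sum.inl (localComp A (Sum.inl x))
      = localComp (SimpleGraph.comap Sum.inl A) x := by
  ext a b
  simp only [SimpleGraph.comap_adj, lc_adj, ne_eq, Sum.inl.injEq]

lemma comap_delv_inr {t : ℕ} (A : SimpleGraph (V ⊕ Fin t)) (j : Fin t) :
    SimpleGraph.comap Sum.inl (delv (Sum.inr j) A) = SimpleGraph.comap Sum.inl A := by
  ext a b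
  simp only [SimpleGraph.comap_adj, delv_adj, ne_eq]
  have h1 : (Sum.inl a : V ⊕ Fin t) ≠ Sum.inr j := Sum.inl_ne_inr
  have h2 : (Sum.inl b : V ⊕ Fin t) ≠ Sum.inr j := Sum.inl_ne_inr
  tauto

lemma comap_delvList {t : ℕ} (l : List (Fin t)) (A : SimpleGraph (V ⊕ Fin t)) :
    SimpleGraph.comap Sum.inl (delvList (l.map Sum.inr) A)
      = SimpleGraph.comap Sum.inl A := by
  induction l generalizing A with
  | nil => rfl
  | cons j l ihl =>
      rw [show delvList ((j :: l).map Sum.inr) A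
          = delvList (l.map Sum.inr) (delv (Sum.inr j) A) from rfl,
        ihl, comap_delv_inr]

lemma RS_inl_comap {t : ℕ} {A Z : SimpleGraph (V ⊕ Fin t)}
    (h : RS {x : V ⊕ Fin t | ∃ y, x = Sum.inl y} A Z) :
    LocEquiv (SimpleGraph.comap Sum.inl A) (SimpleGraph.comap Sum.inl Z) := by
  induction h with
  | refl => exact Relation.ReflTransGen.refl
  | @tail b c hab hbc ihc =>
      obtain ⟨w, ⟨y, rfl⟩, rfl⟩ := hbc
      exact Relation.ReflTransGen.tail ihc ⟨y, comap_lc b y⟩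

lemma LE_to_RS {A B : SimpleGraph V} (h : LocEquiv A B) : RS Set.univ A B :=
  Relation.ReflTransGen.mono (fun _ _ ⟨v, hv⟩ => ⟨v, trivial, hv⟩) _ _ h

lemma lift_word {t : ℕ} {G G' : SimpleGraph V} (h : LocEquiv G G')
    (A : SimpleGraph (V ⊕ Fin t)) (hA : SimpleGraph.comap Sum.inl A = G) :
    ∃ A', RS Set.univ A A' ∧ SimpleGraph.comap Sum.inl A' = G' := by
  induction h with
  | refl => exact ⟨A, RS.refl, hA⟩
  | @tail b c hab hbc ihb =>
      obtain ⟨x, rfl⟩ := hbc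
      obtain ⟨A1, hr, hc⟩ := ihb
      exact ⟨localComp A1 (Sum.inl x), hr.tail trivial, by rw [comap_lc, hc]⟩

/-- If a graph `G` has a `t`-perturbation `G~` with no vertex-minor
isomorphic to `H`, then `G` has no vertex-minor isomorphic to `(t+1)H`. -/
theorem no_large_packing_of_perturbation {V W : Type} [Fintype V] [Fintype W]
    (H : SimpleGraph W) (t : ℕ) (G Gt : SimpleGraph V)
    (hpert : IsPerturbation t Gt G) (hno : ¬ HasVertexMinor Gt H) :
    ¬ HasVertexMinor G (copies (t + 1) H) := by
  intro hm
  obtain ⟨Gbig, ⟨B₁, hB₁e, hB₁⟩, ⟨B₂, hB₂e, hB₂⟩⟩ := hpert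
  obtain ⟨f, G', hG'e, hpat⟩ := hm
  apply hno
  have hcomap2 : SimpleGraph.comap Sum.inl B₂ = G := by
    ext a b
    exact (hB₂ a b).symm
  obtain ⟨B₂', hRS2, hc2'⟩ := lift_word hG'e B₂ hcomap2
  have hRS12 : RS Set.univ B₁ B₂' :=
    (((LE_to_RS hB₁e).symm.trans (LE_to_RS hB₂e)).trans hRS2)
  set emb : Fin (t+1) × W → (V ⊕ Fin t) := fun p => Sum.inl (f p) with hemb
  have hinj : Function.Injective emb := fun p q h => f.injective (Sum.inl_injective h)
  have hpatt0 : patt H (t+1) emb Finset.univ B₂' := by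
    intro p q _ _
    have h1 : B₂'.Adj (emb p) (emb q)
        ↔ (SimpleGraph.comap Sum.inl B₂').Adj (f p) (f q) := Iff.rfl
    rw [h1, hc2']
    exact (hpat p q).symm
  set vs : List (V ⊕ Fin t) := (List.finRange t).map Sum.inr with hvsdef
  have hnd : vs.Nodup := (List.nodup_finRange t).map Sum.inr_injective
  have hiso : isolatedOff Set.univ B₁ := fun p hp => absurd (Set.mem_univ p) hp
  have hSs : ∀ p : Fin (t+1) × W, emb p ∈ Set.univ ∧ ∀ v ∈ vs, emb p ≠ v := by
    intro p
    refine ⟨trivial, fun v hv => ?_⟩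
    obtain ⟨j, _, rfl⟩ := List.mem_map.mp hv
    simp [hemb]
  obtain ⟨X', I', hsub, hcard, hRSfin, hpattfin⟩ :=
    iterdrop hinj vs hnd Set.univ B₁ B₂' (fun v _ => trivial) hRS12 hiso hSs
      Finset.univ hpatt0
  have hI' : I'.Nonempty := by
    rw [← Finset.card_pos]
    have h1 : (Finset.univ : Finset (Fin (t+1))).card = t + 1 := by simp
    have h2 : vs.length = t := by simp [hvsdef]
    omega
  obtain ⟨i₀, hi₀⟩ := hI'
  have hceq : SimpleGraph.comap Sum.inl (delvList vs B₁) = Gt := by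
    rw [hvsdef, comap_delvList]
    ext a b
    exact (hB₁ a b).symm
  have hloceq : LocEquiv Gt (SimpleGraph.comap Sum.inl X') := by
    have hsubset : (Set.univ \ {x : V ⊕ Fin t | x ∈ vs})
        ⊆ {x : V ⊕ Fin t | ∃ y, x = Sum.inl y} := by
      intro x hx
      rcases x with y | j
      · exact ⟨y, rfl⟩
      · exfalso
        exact hx.2 (by simp [hvsdef])
    have := RS_inl_comap (RS.mono hsubset hRSfin)
    rw [hceq] at this
    exact this
  refine ⟨⟨fun a => f (i₀, a), fun a b h => ?_⟩, SimpleGraph.comap Sum.inl X', hloceq, ?_⟩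
  · have := f.injective h
    exact congrArg Prod.snd this
  · intro a b
    have hpq := hpattfin (i₀, a) (i₀, b) hi₀ hi₀
    constructor
    · intro h
      exact hpq.mpr ⟨rfl, h⟩
    · intro h
      exact (hpq.mp h).2

end EP
end

section
/- Let T be a tree, let k and m be positive integers, and let R1, R2, ..., Rm be pairwise disjoint sets of vertices of T such that |Ri| > (mk-1)^2 for each i in [m]. Then there exist a subtree T' of T and sets R1', R2', ..., Rm' such that for each i in [m], Ri' is a subset of Ri intersected with V(T'), |Ri'| = k, and each vertex in Ri' has degree at most m^2 + 1 in T'. -/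
namespace EP

open SimpleGraph

variable {V W : Type} (T : SimpleGraph V)

lemma exists_walk_of_induce_connected {s : Set V} (h : (T.induce s).Connected)
    {u w : V} (hu : u ∈ s) (hw : w ∈ s) :
    ∃ p : T.Walk u w, ∀ x ∈ p.support, x ∈ s := by
  obtain ⟨q⟩ := h.preconnected ⟨u, hu⟩ ⟨w, hw⟩
  refine ⟨q.map (Embedding.induce s).toHom, ?_⟩
  intro x hx
  change x ∈ (q.map (Embedding.induce s).toHom).support at hx
  rw [Walk.support_map] at hx
  obtain ⟨y, _, rfl⟩ := List.mem_map.1 hx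
  exact y.2

lemma induce_connected_of_walks {s : Set V} (hne : s.Nonempty)
    (h : ∀ u ∈ s, ∀ w ∈ s, ∃ p : T.Walk u w, ∀ x ∈ p.support, x ∈ s) :
    (T.induce s).Connected := by
  obtain ⟨u, hu⟩ := hne
  apply induce_connected_of_patches u hu
  intro v hv
  obtain ⟨p, hp⟩ := h u hu v hv
  exact ⟨{x | x ∈ p.support}, hp, p.start_mem_support, p.end_mem_support,
    (p.connected_induce_support).preconnected _ _⟩

lemma walk_snd {α β : V} (W : T.Walk α β) (hne : α ≠ β) :
    ∃ a, T.Adj α a ∧ a ∈ W.support.tail := by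
  cases W with
  | nil => exact absurd rfl hne
  | cons hadj W' => exact ⟨_, hadj, W'.start_mem_support⟩

lemma induce_connected_diff_leaf [Finite V] {s : Set V} (h : (T.induce s).Connected) {v : V}
    (hdeg : {u | u ∈ s ∧ T.Adj v u}.ncard ≤ 1) (hne : (s \ {v}).Nonempty) :
    (T.induce (s \ {v})).Connected := by
  classical
  apply induce_connected_of_walks T hne
  rintro u ⟨hu, hu'⟩ w ⟨hw, hw'⟩
  simp only [Set.mem_singleton_iff] at hu' hw'
  obtain ⟨p, hp⟩ := exists_walk_of_induce_connected T h hu hw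
  set q : T.Walk u w := (p.toPath : T.Walk u w) with hq
  have hqsupp : ∀ x ∈ q.support, x ∈ s := fun x hx => hp x (p.support_toPath_subset hx)
  have hqpath : q.IsPath := p.toPath.2
  refine ⟨q, fun x hx => ⟨hqsupp x hx, ?_⟩⟩
  simp only [Set.mem_singleton_iff]
  intro hxv
  subst hxv
  -- x = x is in the support of the path q; derive a contradiction
  have hmem : x ∈ q.support := hx
  set t := q.takeUntil x hmem with ht
  set d := q.dropUntil x hmem with hd
  have hspec : t.append d = q := q.take_spec hmem
  have hxw : x ≠ w := fun hxw => hw' hxw.symm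
  have hxu : x ≠ u := fun hxu => hu' hxu.symm
  obtain ⟨b, hadjb, hbtail⟩ := walk_snd T d hxw
  obtain ⟨a, hadja, hatail⟩ := walk_snd T t.reverse hxu
  have hasupp : a ∈ t.support := by
    have : a ∈ t.reverse.support := List.mem_of_mem_tail hatail
    rwa [Walk.support_reverse, List.mem_reverse] at this
  -- a = b by degree hypothesis
  have hbs : b ∈ s := by
    apply hqsupp
    rw [← hspec, Walk.support_append]
    exact List.mem_append_right _ hbtail
  have has : a ∈ s := by
    apply hqsupp
    rw [← hspec, Walk.support_append]
    exact List.mem_append_left _ hasupp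
  have hab : a = b := by
    have := (Set.ncard_le_one (Set.toFinite _)).1 hdeg
    exact this a ⟨has, hadja⟩ b ⟨hbs, hadjb⟩
  -- contradiction with Nodup
  have hnodup : (t.support ++ d.support.tail).Nodup := by
    rw [← Walk.support_append, hspec]
    exact hqpath.support_nodup
  rw [List.nodup_append] at hnodup
  exact hnodup.2.2 a hasupp a (hab ▸ hbtail) rfl


lemma induce_isAcyclic (h : T.IsAcyclic) (s : Set V) : (T.induce s).IsAcyclic := by
  intro v c hc
  exact h (c.map (Embedding.induce s).toHom) (hc.map Subtype.val_injective)

lemma degree_induce [Fintype V] {s : Set V} [Fintype s] (v : s) [Fintype ((T.induce s).neighborSet v)] :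
    (T.induce s).degree v = {u | u ∈ s ∧ T.Adj ↑v u}.ncard := by
  classical
  have himg : {u | u ∈ s ∧ T.Adj ↑v u} = Subtype.val '' ((T.induce s).neighborSet v) := by
    ext u
    constructor
    · rintro ⟨hus, hadj⟩
      exact ⟨⟨u, hus⟩, hadj, rfl⟩
    · rintro ⟨y, hy, rfl⟩
      exact ⟨y.2, hy⟩
  rw [himg, Set.ncard_image_of_injective _ Subtype.val_injective]
  rw [Set.ncard_eq_toFinset_card']
  rfl

lemma degree_pos_of_connected [Fintype W] (G : SimpleGraph W) [DecidableRel G.Adj]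
    (h : G.Connected) (h2 : 1 < Fintype.card W) (x : W) : 0 < G.degree x := by
  rw [G.degree_pos_iff_exists_adj]
  obtain ⟨y, hy⟩ := Fintype.exists_ne_of_one_lt_card h2 x
  obtain ⟨p⟩ := h.preconnected x y
  cases p with
  | nil => exact absurd rfl (Ne.symm hy)
  | cons hadj p' => exact ⟨_, hadj⟩



/-- Let `T` be a tree and `R 1, …, R m` pairwise disjoint sets of
vertices of `T`, each of size more than `(mk-1)^2`. Then there is a subtree `T'` of `T`
(given by a set `S` of vertices inducing a connected subgraph) and sets `R' i ⊆ R i ∩ S`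
of size `k` all of whose vertices have degree at most `m² + 1` in `T'`. -/
theorem subtree_selection {V : Type} [Fintype V] (T : SimpleGraph V) (hT : T.IsTree)
    (k m : ℕ) (hk : 0 < k) (hm : 0 < m) (R : Fin m → Set V)
    (hdisj : ∀ i j, i ≠ j → Disjoint (R i) (R j))
    (hcard : ∀ i, (m * k - 1) ^ 2 < (R i).ncard) :
    ∃ S : Set V, (T.induce S).Connected ∧
      ∃ R' : Fin m → Set V, ∀ i : Fin m,
        R' i ⊆ R i ∩ S ∧ (R' i).ncard = k ∧
        ∀ v ∈ R' i, {u | u ∈ S ∧ T.Adj v u}.ncard ≤ m ^ 2 + 1 := by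
  classical
  by_cases hmk1 : m = 1 ∧ k = 1
  · -- trivial case m = k = 1
    obtain ⟨hm1, hk1⟩ := hmk1
    subst hm1 hk1
    have h0 : (0:ℕ) < (R 0).ncard := by simpa using hcard 0
    obtain ⟨v, hv⟩ := (Set.ncard_pos (Set.toFinite _)).1 h0
    have hempty : {u | u ∈ ({v} : Set V) ∧ T.Adj v u} = ∅ := by
      ext u
      simp only [Set.mem_setOf_eq, Set.mem_singleton_iff, Set.mem_empty_iff_false, iff_false,
        not_and]
      rintro rfl
      exact fun h => T.irrefl h
    refine ⟨{v}, ?_, fun _ => {v}, fun i => ⟨?_, by simp, ?_⟩⟩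
    · rw [induce_singleton_eq_top]
      have : Nonempty ({v} : Set V) := ⟨⟨v, rfl⟩⟩
      exact connected_top
    · have : i = 0 := Subsingleton.elim _ _
      subst this
      intro x hx
      rcases hx with rfl
      exact ⟨hv, rfl⟩
    · intro w hw
      rcases hw with rfl
      rw [hempty]
      simp
  · -- main case
    set K : ℕ := if m = 1 then 2 * k - 2 else 2 * k with hKdef
    have hk2 : m = 1 → 2 ≤ k := by
      intro h1
      rcases Nat.lt_or_ge k 2 with h | h
      · exact absurd ⟨h1, by omega⟩ hmk1
      · exact h
    have hK2 : 2 ≤ K := by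
      rw [hKdef]
      split_ifs with h1
      · have := hk2 h1; omega
      · omega
    have hKR : ∀ i, K ≤ (R i).ncard := by
      intro i
      have hc := hcard i
      rw [hKdef]
      split_ifs with h1
      · -- m = 1 : need 2k-2 ≤ (k-1)^2 + 1
        subst h1
        have hk2' := hk2 rfl
        have h3 : 2 * (k - 1) ≤ (k - 1) ^ 2 + 1 := by
          rcases Nat.lt_or_ge (k - 1) 2 with h | h
          · have : k - 1 = 1 := by omega
            rw [this]; norm_num
          · have : 2 * (k-1) ≤ (k-1) * (k-1) := Nat.mul_le_mul_right _ h
            have h2 : (k-1) * (k-1) = (k-1)^2 := (sq (k-1)).symm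
            omega
        simp only [one_mul] at hc
        omega
      · -- m ≥ 2 : need 2k ≤ (mk-1)^2 + 1
        have hm2 : 2 ≤ m := by omega
        have h4 : 2 * k ≤ m * k := Nat.mul_le_mul_right _ hm2
        have h5 : m * k - 1 ≤ (m * k - 1) ^ 2 := Nat.le_self_pow (by norm_num) _
        omega
    -- minimal finset with the property
    set P : Finset V → Prop :=
      fun t => (T.induce (↑t : Set V)).Connected ∧ ∀ i, K ≤ (R i ∩ (↑t : Set V)).ncard with hP
    have hPuniv : P Finset.univ := by
      constructor
      · rw [Finset.coe_univ]
        exact (induceUnivIso T).connected_iff.2 hT.isConnected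
      · intro i
        rw [Finset.coe_univ, Set.inter_univ]
        exact hKR i
    obtain ⟨s, hsF, hmin⟩ := Finset.exists_min_image
      (Finset.univ.powerset.filter P) Finset.card
      ⟨Finset.univ, Finset.mem_filter.2 ⟨Finset.mem_powerset.2 (Finset.subset_univ _), hPuniv⟩⟩
    have hsP : P s := (Finset.mem_filter.1 hsF).2
    set D : V → ℕ := fun v => {u | u ∈ (↑s : Set V) ∧ T.Adj v u}.ncard with hD
    -- |s| ≥ 2
    have hs2 : 2 ≤ s.card := by
      have h1 := hsP.2 ⟨0, hm⟩
      have h2 : (R ⟨0, hm⟩ ∩ (↑s : Set V)).ncard ≤ s.card := by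
        rw [← Set.ncard_coe_finset s]
        exact Set.ncard_le_ncard Set.inter_subset_right (Set.toFinite _)
      omega
    have hcardeq : Fintype.card (↑s : Set V) = s.card := by
      rw [← Nat.card_eq_fintype_card, Nat.card_coe_set_eq, Set.ncard_coe_finset]
    -- induced graph is a tree
    have htree : (T.induce (↑s : Set V)).IsTree := ⟨hsP.1, induce_isAcyclic T hT.2 _⟩
    -- degree identification
    have hdeg : ∀ x : (↑s : Set V), (T.induce (↑s : Set V)).degree x = D ↑x :=
      fun x => degree_induce T x
    -- degree sum
    have hsum : (∑ v ∈ s, D v) + 2 = 2 * s.card := by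
      have h1 := (T.induce (↑s : Set V)).sum_degrees_eq_twice_card_edges
      have h2 := htree.card_edgeFinset
      rw [hcardeq] at h2
      have h3 : ∑ x : (↑s : Set V), (T.induce (↑s : Set V)).degree x = ∑ v ∈ s, D v := by
        rw [Finset.sum_congr rfl (fun x _ => hdeg x)]
        exact Finset.sum_coe_sort s D
      omega
    -- min degree 1
    have hD1 : ∀ v ∈ s, 1 ≤ D v := by
      intro v hv
      have := degree_pos_of_connected (T.induce (↑s : Set V)) hsP.1
        (by omega : 1 < Fintype.card (↑s : Set V)) ⟨v, hv⟩
      rw [hdeg ⟨v, hv⟩] at this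
      exact this
    set L : Finset V := s.filter (fun v => D v = 1) with hL
    set Bad : Finset V := s.filter (fun v => m ^ 2 + 2 ≤ D v) with hBad
    -- degree-sum counting
    have hsplit : m ^ 2 * Bad.card + 2 ≤ L.card := by
      have hm2pos : 1 ≤ m ^ 2 := Nat.one_le_pow _ _ hm
      set s' : Finset V := s.filter (fun v => ¬ D v = 1) with hs'
      set Mid : Finset V := s'.filter (fun v => ¬ (m ^ 2 + 2 ≤ D v)) with hMid
      have hBadeq : Bad = s'.filter (fun v => m ^ 2 + 2 ≤ D v) := by
        ext v
        simp only [hBad, hs', Finset.mem_filter]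
        constructor
        · rintro ⟨hv, h2⟩; exact ⟨⟨hv, by omega⟩, h2⟩
        · rintro ⟨⟨hv, _⟩, h2⟩; exact ⟨hv, h2⟩
      have hsplit1 : (∑ v ∈ L, D v) + (∑ v ∈ s', D v) = ∑ v ∈ s, D v :=
        Finset.sum_filter_add_sum_filter_not s _ D
      have hsplit2 : (∑ v ∈ Bad, D v) + (∑ v ∈ Mid, D v) = ∑ v ∈ s', D v := by
        rw [hBadeq, hMid]
        exact Finset.sum_filter_add_sum_filter_not s' _ D
      have hcard1 : L.card + s'.card = s.card :=
        Finset.card_filter_add_card_filter_not _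
      have hcard2 : Bad.card + Mid.card = s'.card := by
        rw [hBadeq, hMid]
        exact Finset.card_filter_add_card_filter_not _
      have h_L : ∑ v ∈ L, D v = L.card := by
        rw [Finset.sum_congr rfl (fun v hv => (Finset.mem_filter.1 hv).2)]
        simp [hL]
      have h_Bad : m ^ 2 * Bad.card + 2 * Bad.card ≤ ∑ v ∈ Bad, D v := by
        have := Finset.card_nsmul_le_sum Bad D (m ^ 2 + 2)
          (fun v hv => (Finset.mem_filter.1 hv).2)
        rw [smul_eq_mul] at this
        calc m ^ 2 * Bad.card + 2 * Bad.card = Bad.card * (m ^ 2 + 2) := by ring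
        _ ≤ ∑ v ∈ Bad, D v := this
      have h_Mid : 2 * Mid.card ≤ ∑ v ∈ Mid, D v := by
        have hmem : ∀ v ∈ Mid, 2 ≤ D v := by
          intro v hv
          simp only [hMid, hs', Finset.mem_filter] at hv
          have := hD1 v hv.1.1
          omega
        have := Finset.card_nsmul_le_sum Mid D 2 hmem
        rw [smul_eq_mul] at this
        calc 2 * Mid.card = Mid.card * 2 := by ring
        _ ≤ ∑ v ∈ Mid, D v := this
      generalize m ^ 2 * Bad.card = qb at h_Bad ⊢
      omega
    -- every leaf is in a tight set
    have htight : ∀ v ∈ L, ∃ i, v ∈ R i ∧ (R i ∩ (↑s : Set V)).ncard ≤ K := by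
      intro v hvL
      have hvs : v ∈ s := (Finset.mem_filter.1 hvL).1
      have hDv : D v = 1 := (Finset.mem_filter.1 hvL).2
      have herase : ¬ P (s.erase v) := by
        intro hPe
        have hmem : s.erase v ∈ Finset.univ.powerset.filter P :=
          Finset.mem_filter.2 ⟨Finset.mem_powerset.2 (Finset.subset_univ _), hPe⟩
        have h1 := hmin _ hmem
        have h2 : (s.erase v).card < s.card := Finset.card_erase_lt_of_mem hvs
        omega
      have hconn : (T.induce (↑(s.erase v) : Set V)).Connected := by
        rw [Finset.coe_erase]
        apply induce_connected_diff_leaf T hsP.1 (le_of_eq hDv)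
        obtain ⟨a, ha, b, hb, hab⟩ := Finset.one_lt_card.1 (by omega : 1 < s.card)
        rcases eq_or_ne a v with rfl | hav
        · exact ⟨b, hb, hab.symm⟩
        · exact ⟨a, ha, hav⟩
      have hfail : ¬ ∀ i, K ≤ (R i ∩ (↑(s.erase v) : Set V)).ncard :=
        fun hh => herase ⟨hconn, hh⟩
      push_neg at hfail
      obtain ⟨i, hi⟩ := hfail
      have hvRi : v ∈ R i := by
        by_contra hvRi
        have heq : R i ∩ (↑(s.erase v) : Set V) = R i ∩ (↑s : Set V) := by
          rw [Finset.coe_erase]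
          ext x
          simp only [Set.mem_inter_iff, Set.mem_diff, Set.mem_singleton_iff]
          constructor
          · rintro ⟨h1, h2, _⟩; exact ⟨h1, h2⟩
          · rintro ⟨h1, h2⟩
            refine ⟨h1, h2, ?_⟩
            rintro rfl
            exact hvRi h1
        rw [heq] at hi
        exact absurd (hsP.2 i) (by omega)
      refine ⟨i, hvRi, ?_⟩
      have hsub : R i ∩ (↑s : Set V) ⊆ (R i ∩ (↑(s.erase v) : Set V)) ∪ {v} := by
        rw [Finset.coe_erase]
        intro x hx
        rcases eq_or_ne x v with rfl | hxv
        · exact Or.inr rfl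
        · exact Or.inl ⟨hx.1, hx.2, hxv⟩
      have h3 := Set.ncard_le_ncard hsub (Set.Finite.union (Set.toFinite _) (Set.toFinite _))
      have h4 := Set.ncard_union_le (R i ∩ (↑(s.erase v) : Set V)) ({v} : Set V)
      have h5 : ({v} : Set V).ncard = 1 := Set.ncard_singleton v
      omega
    -- number of leaves bounded
    have hLle : L.card ≤ m * K := by
      have hsub : L ⊆ Finset.univ.biUnion (fun i : Fin m => L.filter (· ∈ R i)) := by
        intro v hv
        obtain ⟨i, hiR, _⟩ := htight v hv
        exact Finset.mem_biUnion.2 ⟨i, Finset.mem_univ _, Finset.mem_filter.2 ⟨hv, hiR⟩⟩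
      have h1 := Finset.card_le_card hsub
      have h2 := Finset.card_biUnion_le (s := (Finset.univ : Finset (Fin m)))
        (t := fun i => L.filter (· ∈ R i))
      have h3 : ∀ i : Fin m, (L.filter (· ∈ R i)).card ≤ K := by
        intro i
        rcases Finset.eq_empty_or_nonempty (L.filter (· ∈ R i)) with he | ⟨v0, hv0⟩
        · rw [he]; simp
        · have hv0L : v0 ∈ L := (Finset.mem_filter.1 hv0).1
          have hv0R : v0 ∈ R i := (Finset.mem_filter.1 hv0).2
          obtain ⟨j, hjR, hjcard⟩ := htight v0 hv0L
          have hij : i = j := by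
            by_contra hne
            exact (hdisj i j hne).le_bot ⟨hv0R, hjR⟩
          subst hij
          have hsub2 : (↑(L.filter (· ∈ R i)) : Set V) ⊆ R i ∩ (↑s : Set V) := by
            intro x hx
            simp only [Finset.coe_filter, Set.mem_setOf_eq] at hx
            exact ⟨hx.2, (Finset.mem_filter.1 hx.1).1⟩
          have h4 := Set.ncard_le_ncard hsub2 (Set.toFinite _)
          rw [Set.ncard_coe_finset] at h4
          omega
      calc L.card ≤ (Finset.univ.biUnion (fun i : Fin m => L.filter (· ∈ R i))).card := h1
      _ ≤ ∑ i : Fin m, (L.filter (· ∈ R i)).card := h2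
      _ ≤ ∑ _i : Fin m, K := Finset.sum_le_sum (fun i _ => h3 i)
      _ = m * K := by rw [Finset.sum_const, Finset.card_univ, Fintype.card_fin, smul_eq_mul]
    -- good vertices
    have hgood : ∀ i : Fin m, k ≤ ((s.filter (· ∈ R i)).filter (fun v => D v ≤ m ^ 2 + 1)).card := by
      intro i
      set ri : Finset V := s.filter (· ∈ R i) with hri
      have hriK : K ≤ ri.card := by
        have h1 := hsP.2 i
        have heq : (↑ri : Set V) = R i ∩ (↑s : Set V) := by
          ext x
          simp only [hri, Finset.coe_filter, Set.mem_setOf_eq, Set.mem_inter_iff]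
          tauto
        rw [← heq, Set.ncard_coe_finset] at h1
        exact h1
      have hBadsub : ri \ Bad ⊆ ri.filter (fun v => D v ≤ m ^ 2 + 1) := by
        intro v hv
        have h1 := (Finset.mem_sdiff.1 hv).1
        have h2 := (Finset.mem_sdiff.1 hv).2
        refine Finset.mem_filter.2 ⟨h1, ?_⟩
        have hvs : v ∈ s := (Finset.mem_filter.1 h1).1
        by_contra hc
        exact h2 (Finset.mem_filter.2 ⟨hvs, by omega⟩)
      have h4 : ri.card - Bad.card ≤ (ri \ Bad).card := Finset.le_card_sdiff Bad ri
      have h5 := Finset.card_le_card hBadsub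
      by_cases hm1 : m = 1
      · -- m = 1
        have hKval : K = 2 * k - 2 := by rw [hKdef, if_pos hm1]
        have hk2' := hk2 hm1
        by_cases hLk : k ≤ L.card
        · -- all leaves are good and in R i
          have hLsub : L ⊆ ri.filter (fun v => D v ≤ m ^ 2 + 1) := by
            intro v hv
            have hvs : v ∈ s := (Finset.mem_filter.1 hv).1
            have hDv : D v = 1 := (Finset.mem_filter.1 hv).2
            obtain ⟨j, hjR, _⟩ := htight v hv
            have hij : i = j := by
              have h1 := i.isLt
              have h2 := j.isLt
              exact Fin.ext (by omega)
            subst hij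
            refine Finset.mem_filter.2 ⟨Finset.mem_filter.2 ⟨hvs, hjR⟩, ?_⟩
            have : 1 ≤ m ^ 2 := Nat.one_le_pow _ _ hm
            omega
          have := Finset.card_le_card hLsub
          omega
        · -- few leaves: few bad vertices
          have hm2 : m ^ 2 = 1 := by rw [hm1]; norm_num
          rw [hm2] at hsplit
          omega
      · -- m ≥ 2
        have hKval : K = 2 * k := by rw [hKdef, if_neg hm1]
        have hm2 : 2 ≤ m := by omega
        have hBadk : Bad.card < k := by
          by_contra hc
          push_neg at hc
          have h6 : m ^ 2 * k ≤ m ^ 2 * Bad.card := Nat.mul_le_mul_left _ hc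
          have h7 : m * K ≤ m ^ 2 * k := by
            rw [hKval, pow_two]
            calc m * (2 * k) = m * 2 * k := by ring
            _ ≤ m * m * k := Nat.mul_le_mul_right _ (Nat.mul_le_mul_left _ hm2)
          omega
        omega
    choose t ht1 ht2 using fun i => Finset.exists_subset_card_eq (hgood i)
    refine ⟨(↑s : Set V), hsP.1, fun i => (↑(t i) : Set V), fun i => ⟨?_, ?_, ?_⟩⟩
    · intro x hx
      have hx' := ht1 i (Finset.mem_coe.1 hx)
      have h1 := (Finset.mem_filter.1 hx').1
      exact ⟨(Finset.mem_filter.1 h1).2, (Finset.mem_filter.1 h1).1⟩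
    · rw [Set.ncard_coe_finset]
      exact ht2 i
    · intro v hv
      have hv' := ht1 i (Finset.mem_coe.1 hv)
      exact (Finset.mem_filter.1 hv').2


end EP
end

section
/- For any graph G and any subset X of V(G), the graph G - delta_G(X) obtained from G by deleting all edges of delta_G(X) is a 2*rho_G(X)-perturbation of G. -/
namespace EP

variable {V W : Type}

open Module in
private lemma rank_factor {m n : Type} [Fintype m] [Fintype n] [DecidableEq n]
    (M : Matrix m n (ZMod 2)) :
    ∃ (a : Fin M.rank → m → ZMod 2) (b : Fin M.rank → n → ZMod 2),
      ∀ x y, M x y = ∑ i, a i x * b i y := by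
  classical
  set R := LinearMap.range M.mulVecLin with hR
  have hr : finrank (ZMod 2) R = M.rank := rfl
  let c : Basis (Fin M.rank) (ZMod 2) R := (Module.finBasis (ZMod 2) R).reindex (finCongr hr)
  have hcol : ∀ y, M.mulVec (Pi.single y 1) ∈ R := fun y => ⟨Pi.single y 1, rfl⟩
  refine ⟨fun i x => (c i : m → ZMod 2) x,
    fun i y => c.repr ⟨M.mulVec (Pi.single y 1), hcol y⟩ i, fun x y => ?_⟩
  have h2 := c.sum_repr ⟨M.mulVec (Pi.single y 1), hcol y⟩
  have h3 : M x y = M.mulVec (Pi.single y 1) x := by simp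
  have h4 := congrFun (congrArg Subtype.val h2) x
  rw [h3]
  have h5 : M.mulVec (Pi.single y 1) x = (⟨M.mulVec (Pi.single y 1), hcol y⟩ : R).val x := rfl
  rw [h5, ← h4]
  simp only [Submodule.coe_sum, Submodule.coe_smul, Finset.sum_apply, Pi.smul_apply, smul_eq_mul,
    mul_comm]

open Classical in
private lemma cutRank_factor [Fintype V] (G : SimpleGraph V) (X : Set V) :
    ∃ (a : Fin (cutRank G X) → ↥X → ZMod 2) (b : Fin (cutRank G X) → ↥Xᶜ → ZMod 2),
      ∀ x y, (if G.Adj x.1 y.1 then (1 : ZMod 2) else 0) = ∑ i, a i x * b i y := by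
  unfold cutRank
  exact rank_factor _

private lemma localComp_adj (G : SimpleGraph V) (v x y : V) :
    (localComp G v).Adj x y ↔ x ≠ y ∧
      ((G.Adj v x ∧ G.Adj v y ∧ ¬ G.Adj x y) ∨ (¬(G.Adj v x ∧ G.Adj v y) ∧ G.Adj x y)) :=
  Iff.rfl

private lemma pivot_adj {T : Type} (H : SimpleGraph T) {u w : T} (huw : H.Adj u w)
    {x y : T} (hxu : x ≠ u) (hxw : x ≠ w) (hyu : y ≠ u) (hyw : y ≠ w) :
    (localComp (localComp (localComp H u) w) u).Adj x y ↔
      x ≠ y ∧ Xor' (H.Adj x y)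
        (Xor' (H.Adj u x ∧ H.Adj w y) (H.Adj u y ∧ H.Adj w x)) := by
  have huw' : H.Adj w u := huw.symm
  have h1 : ¬ H.Adj u u := H.irrefl
  have h2 : ¬ H.Adj w w := H.irrefl
  have hne : u ≠ w := huw.ne
  have hne' : w ≠ u := huw.ne'
  have hxu' : u ≠ x := hxu.symm
  have hxw' : w ≠ x := hxw.symm
  have hyu' : u ≠ y := hyu.symm
  have hyw' : w ≠ y := hyw.symm
  by_cases hxy : x = y
  · subst hxy
    simp [Xor']
  · have hxy' : y ≠ x := fun h => hxy h.symm
    by_cases a1 : H.Adj u x <;> by_cases a2 : H.Adj u y <;>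
      by_cases a3 : H.Adj w x <;> by_cases a4 : H.Adj w y <;>
      by_cases a5 : H.Adj x y <;>
      simp_all [localComp_adj, Xor']

private def uuF {r : ℕ} (i : Fin r) : Fin (2 * r) := ⟨2 * i.1, by have := i.2; omega⟩
private def wwF {r : ℕ} (i : Fin r) : Fin (2 * r) := ⟨2 * i.1 + 1, by have := i.2; omega⟩

private lemma uuF_inj {r : ℕ} {i j : Fin r} (h : uuF i = uuF j) : i = j := by
  have := congrArg Fin.val h
  simp only [uuF] at this
  exact Fin.ext (by omega)

private lemma wwF_inj {r : ℕ} {i j : Fin r} (h : wwF i = wwF j) : i = j := by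
  have := congrArg Fin.val h
  simp only [wwF] at this
  exact Fin.ext (by omega)

private lemma uuF_ne_wwF {r : ℕ} (i j : Fin r) : uuF i ≠ wwF j := by
  intro h
  have := congrArg Fin.val h
  simp only [uuF, wwF] at this
  omega

private def bigBase (G : SimpleGraph V) (r : ℕ) (a' b' : Fin r → V → ZMod 2) :
    V ⊕ Fin (2 * r) → V ⊕ Fin (2 * r) → Prop
  | .inl x, .inl y => G.Adj x y
  | .inr k, .inl v => (∃ i, k = uuF i ∧ a' i v = 1) ∨ (∃ i, k = wwF i ∧ b' i v = 1)
  | .inr k, .inr k' => ∃ i, k = uuF i ∧ k' = wwF i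
  | .inl _, .inr _ => False

private lemma big_adj_ll (G : SimpleGraph V) (r : ℕ) (a' b' : Fin r → V → ZMod 2) (x y : V) :
    (SimpleGraph.fromRel (bigBase G r a' b')).Adj (Sum.inl x) (Sum.inl y) ↔ G.Adj x y := by
  rw [SimpleGraph.fromRel_adj]
  constructor
  · rintro ⟨-, h | h⟩
    · exact h
    · exact h.symm
  · intro h
    exact ⟨fun he => h.ne (Sum.inl_injective he), Or.inl h⟩

private lemma big_adj_ul (G : SimpleGraph V) (r : ℕ) (a' b' : Fin r → V → ZMod 2)
    (i : Fin r) (v : V) :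
    (SimpleGraph.fromRel (bigBase G r a' b')).Adj (Sum.inr (uuF i)) (Sum.inl v) ↔ a' i v = 1 := by
  rw [SimpleGraph.fromRel_adj]
  constructor
  · rintro ⟨-, h | h⟩
    · rcases h with ⟨j, hj, ha⟩ | ⟨j, hj, hb⟩
      · rwa [uuF_inj hj]
      · exact absurd hj (uuF_ne_wwF i j)
    · exact h.elim
  · intro h
    exact ⟨Sum.inr_ne_inl, Or.inl (Or.inl ⟨i, rfl, h⟩)⟩

private lemma big_adj_wl (G : SimpleGraph V) (r : ℕ) (a' b' : Fin r → V → ZMod 2)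
    (i : Fin r) (v : V) :
    (SimpleGraph.fromRel (bigBase G r a' b')).Adj (Sum.inr (wwF i)) (Sum.inl v) ↔ b' i v = 1 := by
  rw [SimpleGraph.fromRel_adj]
  constructor
  · rintro ⟨-, h | h⟩
    · rcases h with ⟨j, hj, ha⟩ | ⟨j, hj, hb⟩
      · exact absurd hj.symm (uuF_ne_wwF j i)
      · rwa [wwF_inj hj]
    · exact h.elim
  · intro h
    exact ⟨Sum.inr_ne_inl, Or.inl (Or.inr ⟨i, rfl, h⟩)⟩

private lemma big_adj_uw (G : SimpleGraph V) (r : ℕ) (a' b' : Fin r → V → ZMod 2)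
    (i j : Fin r) :
    (SimpleGraph.fromRel (bigBase G r a' b')).Adj (Sum.inr (uuF i)) (Sum.inr (wwF j)) ↔ i = j := by
  rw [SimpleGraph.fromRel_adj]
  constructor
  · rintro ⟨-, h | h⟩
    · obtain ⟨l, h1, h2⟩ := h
      rw [uuF_inj h1, wwF_inj h2]
    · obtain ⟨l, h1, h2⟩ := h
      exact absurd h1.symm (uuF_ne_wwF l j)
  · rintro rfl
    exact ⟨fun he => uuF_ne_wwF i i (Sum.inr_injective he), Or.inl ⟨i, rfl, rfl⟩⟩

private lemma big_adj_uu (G : SimpleGraph V) (r : ℕ) (a' b' : Fin r → V → ZMod 2)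
    (i j : Fin r) :
    ¬ (SimpleGraph.fromRel (bigBase G r a' b')).Adj (Sum.inr (uuF i)) (Sum.inr (uuF j)) := by
  rw [SimpleGraph.fromRel_adj]
  rintro ⟨-, h | h⟩ <;>
  · obtain ⟨l, h1, h2⟩ := h
    exact uuF_ne_wwF _ _ h2

private lemma big_adj_ww (G : SimpleGraph V) (r : ℕ) (a' b' : Fin r → V → ZMod 2)
    (i j : Fin r) :
    ¬ (SimpleGraph.fromRel (bigBase G r a' b')).Adj (Sum.inr (wwF i)) (Sum.inr (wwF j)) := by
  rw [SimpleGraph.fromRel_adj]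
  rintro ⟨-, h | h⟩ <;>
  · obtain ⟨l, h1, h2⟩ := h
    exact uuF_ne_wwF _ _ h1.symm

set_option synthInstance.maxSize 4000 in
set_option synthInstance.maxHeartbeats 1000000 in
private lemma zmod_xor (A : Prop) (p q s t u : ZMod 2) :
    Xor' (Xor' A (u = 1)) (Xor' (p = 1 ∧ q = 1) (s = 1 ∧ t = 1)) ↔
      Xor' A (p * q + s * t + u = 1) := by
  by_cases hA : A <;> simp only [hA, Xor'] <;> revert p q s t u <;> decide

private lemma pivot_chain (G : SimpleGraph V) (r : ℕ)
    (a' b' : Fin r → V → ZMod 2) (S : Finset (Fin r)) :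
    ∃ H : SimpleGraph (V ⊕ Fin (2 * r)),
      LocEquiv (SimpleGraph.fromRel (bigBase G r a' b')) H ∧
      (∀ x y : V, x ≠ y → (H.Adj (Sum.inl x) (Sum.inl y) ↔
        Xor' (G.Adj x y) ((∑ i ∈ S, (a' i x * b' i y + a' i y * b' i x)) = 1))) ∧
      (∀ j, j ∉ S → ∀ v, (H.Adj (Sum.inr (uuF j)) (Sum.inl v) ↔ a' j v = 1)) ∧
      (∀ j, j ∉ S → ∀ v, (H.Adj (Sum.inr (wwF j)) (Sum.inl v) ↔ b' j v = 1)) ∧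
      (∀ j, j ∉ S → H.Adj (Sum.inr (uuF j)) (Sum.inr (wwF j))) ∧
      (∀ j j', j ∉ S → j' ∉ S → ¬ H.Adj (Sum.inr (uuF j)) (Sum.inr (uuF j'))) ∧
      (∀ j j', j ∉ S → j' ∉ S → ¬ H.Adj (Sum.inr (wwF j)) (Sum.inr (wwF j'))) ∧
      (∀ j j', j ∉ S → j' ∉ S → j ≠ j' → ¬ H.Adj (Sum.inr (uuF j)) (Sum.inr (wwF j'))) := by
  classical
  induction S using Finset.induction_on with
  | empty =>
    refine ⟨SimpleGraph.fromRel (bigBase G r a' b'), Relation.ReflTransGen.refl,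
      ?_, ?_, ?_, ?_, ?_, ?_, ?_⟩
    · intro x y hxy
      rw [big_adj_ll]
      simp [Xor', Xor, show ¬((0 : ZMod 2) = 1) from by decide]
    · intro j _ v; exact big_adj_ul G r a' b' j v
    · intro j _ v; exact big_adj_wl G r a' b' j v
    · intro j _; exact (big_adj_uw G r a' b' j j).mpr rfl
    · intro j j' _ _; exact big_adj_uu G r a' b' j j'
    · intro j j' _ _; exact big_adj_ww G r a' b' j j'
    · intro j j' _ _ hne h; exact hne ((big_adj_uw G r a' b' j j').mp h)
  | @insert s S hs IH =>
    obtain ⟨H, hloc, h1, h2a, h2b, h2c, h2d, h2e, h2f⟩ := IH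
    set U : V ⊕ Fin (2 * r) := Sum.inr (uuF s) with hU
    set W : V ⊕ Fin (2 * r) := Sum.inr (wwF s) with hW
    have hUW : H.Adj U W := h2c s hs
    set P := localComp (localComp (localComp H U) W) U with hP
    have hstep : LocEquiv H P :=
      Relation.ReflTransGen.tail
        (Relation.ReflTransGen.tail
          (Relation.ReflTransGen.tail Relation.ReflTransGen.refl ⟨U, rfl⟩) ⟨W, rfl⟩) ⟨U, rfl⟩
    have hpre : ∀ z z' : V ⊕ Fin (2 * r), z ≠ U → z ≠ W → z' ≠ U → z' ≠ W →
        ¬ H.Adj U z → ¬ H.Adj W z → (P.Adj z z' ↔ H.Adj z z') := by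
      intro z z' n1 n2 n3 n4 q1 q2
      rw [hP, pivot_adj H hUW n1 n2 n3 n4]
      have ht : Xor' (H.Adj U z ∧ H.Adj W z') (H.Adj U z' ∧ H.Adj W z) ↔ False := by
        simp [Xor', q1, q2]
      rw [ht]
      constructor
      · rintro ⟨-, ⟨h, -⟩ | ⟨h, -⟩⟩
        · exact h
        · exact h.elim
      · intro h
        exact ⟨h.ne, Or.inl ⟨h, not_false⟩⟩
    -- ne facts for pending indices
    have neU_u : ∀ j : Fin r, j ≠ s → (Sum.inr (uuF j) : V ⊕ Fin (2 * r)) ≠ U :=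
      fun j hj h => hj (uuF_inj (Sum.inr_injective h))
    have neW_u : ∀ j : Fin r, (Sum.inr (uuF j) : V ⊕ Fin (2 * r)) ≠ W :=
      fun j h => uuF_ne_wwF j s (Sum.inr_injective h)
    have neU_w : ∀ j : Fin r, (Sum.inr (wwF j) : V ⊕ Fin (2 * r)) ≠ U :=
      fun j h => uuF_ne_wwF s j (Sum.inr_injective h).symm
    have neW_w : ∀ j : Fin r, j ≠ s → (Sum.inr (wwF j) : V ⊕ Fin (2 * r)) ≠ W :=
      fun j hj h => hj (wwF_inj (Sum.inr_injective h))
    have qu_u : ∀ j : Fin r, j ∉ S → ¬ H.Adj U (Sum.inr (uuF j)) :=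
      fun j hj => h2d s j hs hj
    have qw_u : ∀ j : Fin r, j ∉ S → j ≠ s → ¬ H.Adj W (Sum.inr (uuF j)) :=
      fun j hj hjs h => h2f j s hj hs hjs h.symm
    have qu_w : ∀ j : Fin r, j ∉ S → j ≠ s → ¬ H.Adj U (Sum.inr (wwF j)) :=
      fun j hj hjs => h2f s j hs hj (fun h => hjs h.symm)
    have qw_w : ∀ j : Fin r, j ∉ S → ¬ H.Adj W (Sum.inr (wwF j)) :=
      fun j hj => h2e s j hs hj
    have memsplit : ∀ j : Fin r, j ∉ insert s S → j ≠ s ∧ j ∉ S := by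
      intro j hj
      constructor
      · intro h; exact hj (h ▸ Finset.mem_insert_self s S)
      · intro h; exact hj (Finset.mem_insert_of_mem h)
    refine ⟨P, hloc.trans hstep, ?_, ?_, ?_, ?_, ?_, ?_, ?_⟩
    · intro x y hxy
      rw [Finset.sum_insert hs, hP,
        pivot_adj H hUW Sum.inl_ne_inr Sum.inl_ne_inr Sum.inl_ne_inr Sum.inl_ne_inr,
        h1 x y hxy, h2a s hs x, h2b s hs y, h2a s hs y, h2b s hs x,
        zmod_xor (G.Adj x y) (a' s x) (b' s y) (a' s y) (b' s x)
          (∑ i ∈ S, (a' i x * b' i y + a' i y * b' i x))]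
      rw [and_iff_right (by simpa using hxy)]
    · intro j hj v
      obtain ⟨hjs, hjS⟩ := memsplit j hj
      rw [hpre _ _ (neU_u j hjs) (neW_u j) Sum.inl_ne_inr Sum.inl_ne_inr
        (qu_u j hjS) (qw_u j hjS hjs)]
      exact h2a j hjS v
    · intro j hj v
      obtain ⟨hjs, hjS⟩ := memsplit j hj
      rw [hpre _ _ (neU_w j) (neW_w j hjs) Sum.inl_ne_inr Sum.inl_ne_inr
        (qu_w j hjS hjs) (qw_w j hjS)]
      exact h2b j hjS v
    · intro j hj
      obtain ⟨hjs, hjS⟩ := memsplit j hj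
      rw [hpre _ _ (neU_u j hjs) (neW_u j) (neU_w j) (neW_w j hjs)
        (qu_u j hjS) (qw_u j hjS hjs)]
      exact h2c j hjS
    · intro j j' hj hj'
      obtain ⟨hjs, hjS⟩ := memsplit j hj
      obtain ⟨hjs', hjS'⟩ := memsplit j' hj'
      rw [hpre _ _ (neU_u j hjs) (neW_u j) (neU_u j' hjs') (neW_u j')
        (qu_u j hjS) (qw_u j hjS hjs)]
      exact h2d j j' hjS hjS'
    · intro j j' hj hj'
      obtain ⟨hjs, hjS⟩ := memsplit j hj
      obtain ⟨hjs', hjS'⟩ := memsplit j' hj'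
      rw [hpre _ _ (neU_w j) (neW_w j hjs) (neU_w j') (neW_w j' hjs')
        (qu_w j hjS hjs) (qw_w j hjS)]
      exact h2e j j' hjS hjS'
    · intro j j' hj hj' hne
      obtain ⟨hjs, hjS⟩ := memsplit j hj
      obtain ⟨hjs', hjS'⟩ := memsplit j' hj'
      rw [hpre _ _ (neU_u j hjs) (neW_u j) (neU_w j') (neW_w j' hjs')
        (qu_u j hjS) (qw_u j hjS hjs)]
      exact h2f j j' hjS hjS' hne



private lemma cutDelete_adj (G : SimpleGraph V) (X : Set V) (x y : V) :
    (cutDelete G X).Adj x y ↔ G.Adj x y ∧ (x ∈ X ↔ y ∈ X) := Iff.rfl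

/-- Deleting all edges crossing `X` is a `2·ρ_G(X)`-perturbation of `G`. -/
theorem cutDelete_isPerturbation {V : Type} [Fintype V] (G : SimpleGraph V) (X : Set V) :
    IsPerturbation (2 * cutRank G X) (cutDelete G X) G := by
  classical
  obtain ⟨a, b, hab⟩ := cutRank_factor G X
  let a' : Fin (cutRank G X) → V → ZMod 2 :=
    fun i v => if h : v ∈ X then a i ⟨v, h⟩ else 0
  let b' : Fin (cutRank G X) → V → ZMod 2 :=
    fun i v => if h : v ∈ Xᶜ then b i ⟨v, h⟩ else 0
  have ha'pos : ∀ i v (h : v ∈ X), a' i v = a i ⟨v, h⟩ := fun i v h => dif_pos h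
  have ha'neg : ∀ i v, v ∉ X → a' i v = 0 := fun i v h => dif_neg h
  have hb'pos : ∀ i v (h : v ∈ Xᶜ), b' i v = b i ⟨v, h⟩ := fun i v h => dif_pos h
  have hb'neg : ∀ i v, v ∈ X → b' i v = 0 := fun i v h => dif_neg (fun hc => hc h)
  obtain ⟨H, hloc, h1, -⟩ := pivot_chain G (cutRank G X) a' b' Finset.univ
  refine ⟨SimpleGraph.fromRel (bigBase G (cutRank G X) a' b'), ⟨H, hloc, ?_⟩,
    ⟨SimpleGraph.fromRel (bigBase G (cutRank G X) a' b'), Relation.ReflTransGen.refl, ?_⟩⟩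
  · intro x y
    simp only [Function.Embedding.coeFn_mk]
    by_cases hxy : x = y
    · subst hxy
      simp [cutDelete_adj]
    · rw [cutDelete_adj, h1 x y hxy]
      by_cases hx : x ∈ X <;> by_cases hy : y ∈ X
      · have hz : ∀ i ∈ Finset.univ, a' i x * b' i y + a' i y * b' i x = (0 : ZMod 2) := by
          intro i _
          rw [hb'neg i y hy, hb'neg i x hx]
          ring
        rw [Finset.sum_congr rfl hz, Finset.sum_const_zero]
        simp [Xor', Xor, hx, hy, show ¬((0 : ZMod 2) = 1) from by decide]
      · have hyc : y ∈ Xᶜ := hy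
        have hsum : (∑ i, (a' i x * b' i y + a' i y * b' i x))
            = (if G.Adj x y then (1 : ZMod 2) else 0) := by
          rw [show (if G.Adj x y then (1 : ZMod 2) else 0)
              = (if G.Adj (⟨x, hx⟩ : X).1 (⟨y, hyc⟩ : ↥Xᶜ).1 then (1 : ZMod 2) else 0) from rfl,
            hab ⟨x, hx⟩ ⟨y, hyc⟩]
          apply Finset.sum_congr rfl
          intro i _
          rw [ha'pos i x hx, hb'pos i y hyc, ha'neg i y hy, hb'neg i x hx]
          ring
        rw [hsum]
        by_cases hA : G.Adj x y <;>
          simp [Xor', hA, hx, hy, show ¬((0 : ZMod 2) = 1) from by decide]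
      · have hxc : x ∈ Xᶜ := hx
        have hsum : (∑ i, (a' i x * b' i y + a' i y * b' i x))
            = (if G.Adj y x then (1 : ZMod 2) else 0) := by
          rw [show (if G.Adj y x then (1 : ZMod 2) else 0)
              = (if G.Adj (⟨y, hy⟩ : X).1 (⟨x, hxc⟩ : ↥Xᶜ).1 then (1 : ZMod 2) else 0) from rfl,
            hab ⟨y, hy⟩ ⟨x, hxc⟩]
          apply Finset.sum_congr rfl
          intro i _
          rw [ha'pos i y hy, hb'pos i x hxc, ha'neg i x hx, hb'neg i y hy]
          ring
        rw [hsum, G.adj_comm x y]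
        by_cases hA : G.Adj y x <;>
          simp [Xor', hA, hx, hy, show ¬((0 : ZMod 2) = 1) from by decide]
      · have hz : ∀ i ∈ Finset.univ, a' i x * b' i y + a' i y * b' i x = (0 : ZMod 2) := by
          intro i _
          rw [ha'neg i x hx, ha'neg i y hy]
          ring
        rw [Finset.sum_congr rfl hz, Finset.sum_const_zero]
        simp [Xor', Xor, hx, hy, show ¬((0 : ZMod 2) = 1) from by decide]
  · intro x y
    simp only [Function.Embedding.coeFn_mk]
    exact (big_adj_ll G (cutRank G X) a' b' x y).symm

end EP
end
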